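/- arXiv:1509.05699 — 4 statements merged into one kernel-verified Lean document; each statement's English description precedes it below -/
import Mathlib

section
/- Let q ∈ (0,∞] and α ∈ ℝ, and let f be a measurable function on X⁺. Then the functions 𝒜^q f and 𝒞^q_α f are lower semicontinuous on X. (Here for q = ∞ one sets 𝒞^∞_α f(x) := sup over balls B ∋ x of μ(B)^{−(1+α)} · ess sup_{(y,t)∈T(B)} |f(y,t)|.) -/
open MeasureTheory Metric Set Filter ENNReal
open scoped NNReal Topology

noncomputable section

namespace WTS

variable {X : Type*} [MetricSpace X] [MeasurableSpace X]

/-- The measure `dt/t` on `(0,∞) ⊆ ℝ`. -/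
def tMeasure : Measure ℝ :=
  (volume.restrict (Ioi (0:ℝ))).withDensity fun t => ENNReal.ofReal t⁻¹

/-- The measure `dμ(y) dt/t` on the generalised half-space `X⁺ = X × (0,∞)`. -/
def muPlus (μ : Measure X) : Measure (X × ℝ) := μ.prod tMeasure

/-- The cone with vertex `x`. -/
def cone (x : X) : Set (X × ℝ) := {p | dist x p.1 < p.2}

/-- The tent over the ball `B(z,r)`. -/
def tent (z : X) (r : ℝ) : Set (X × ℝ) := {p | 0 < p.2 ∧ ball p.1 p.2 ⊆ ball z r}

/-- Ball volume `V(x,t)`. -/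
def vol (μ : Measure X) (x : X) (t : ℝ) : ℝ≥0∞ := μ (ball x t)

/-- The multiplication operator `V^s`. -/
def Vpow (μ : Measure X) (s : ℝ) (f : X × ℝ → ℂ) : X × ℝ → ℂ := fun p =>
  (((vol μ p.1 p.2).toReal ^ s : ℝ) : ℂ) * f p

/-- `𝒜^q f (x)`, `q` finite. -/
def Aq (μ : Measure X) (q : ℝ) (f : X × ℝ → ℂ) (x : X) : ℝ≥0∞ :=
  (∫⁻ p in cone x, (‖f p‖₊ : ℝ≥0∞) ^ q / vol μ p.1 p.2 ∂muPlus μ) ^ (1/q)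

/-- `𝒜^∞ f (x)`. -/
def Ainf (μ : Measure X) (f : X × ℝ → ℂ) (x : X) : ℝ≥0∞ :=
  essSup (fun p => (‖f p‖₊ : ℝ≥0∞)) ((muPlus μ).restrict (cone x))

/-- `𝒜^q f (x)` for `q ∈ (0,∞]`. -/
def AqE (μ : Measure X) (q : ℝ≥0∞) (f : X × ℝ → ℂ) (x : X) : ℝ≥0∞ :=
  if q = ∞ then Ainf μ f x else Aq μ q.toReal f x

/-- `𝒞^q_α f (x)`, `q` finite. -/
def Cq (μ : Measure X) (q α : ℝ) (f : X × ℝ → ℂ) (x : X) : ℝ≥0∞ :=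
  ⨆ (z : X) (r : ℝ) (_ : 0 < r ∧ x ∈ ball z r),
    μ (ball z r) ^ (-α) *
      ((μ (ball z r))⁻¹ * ∫⁻ p in tent z r, (‖f p‖₊ : ℝ≥0∞) ^ q ∂muPlus μ) ^ (1/q)

/-- `𝒞^∞_α f (x)`. -/
def Cinf (μ : Measure X) (α : ℝ) (f : X × ℝ → ℂ) (x : X) : ℝ≥0∞ :=
  ⨆ (z : X) (r : ℝ) (_ : 0 < r ∧ x ∈ ball z r),
    μ (ball z r) ^ (-(1+α)) *
      essSup (fun p => (‖f p‖₊ : ℝ≥0∞)) ((muPlus μ).restrict (tent z r))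

/-- `𝒞^q_α f (x)` for `q ∈ (0,∞]`. -/
def CqE (μ : Measure X) (q : ℝ≥0∞) (α : ℝ) (f : X × ℝ → ℂ) (x : X) : ℝ≥0∞ :=
  if q = ∞ then Cinf μ α f x else Cq μ q.toReal α f x

/-- The (unweighted) tent space quasinorm `‖f‖_{T^{p,q}}`, `p, q` finite. -/
def tentNorm (μ : Measure X) (p q : ℝ) (f : X × ℝ → ℂ) : ℝ≥0∞ :=
  (∫⁻ x, Aq μ q f x ^ p ∂μ) ^ (1/p)

/-- The weighted tent space quasinorm `‖f‖_{T^{p,q}_s}`, `p, q` finite. -/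
def tentNormS (μ : Measure X) (p q s : ℝ) (f : X × ℝ → ℂ) : ℝ≥0∞ :=
  tentNorm μ p q (Vpow μ (-s) f)

/-- The quasinorm `‖f‖_{T^{p,∞}}`, `p` finite. -/
def tentNormQInf (μ : Measure X) (p : ℝ) (f : X × ℝ → ℂ) : ℝ≥0∞ :=
  (∫⁻ x, Ainf μ f x ^ p ∂μ) ^ (1/p)

/-- The norm `‖f‖_{T^{∞,q}_{s;α}}`, `q` finite. -/
def tentNormPInf (μ : Measure X) (q s α : ℝ) (f : X × ℝ → ℂ) : ℝ≥0∞ :=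
  essSup (Cq μ q α (Vpow μ (-s) f)) μ

/-- The norm `‖f‖_{T^{∞,∞}_{s;α}} = sup_B μ(B)^{-α} ‖V^{-s} f‖_{L^∞(T(B))}`. -/
def tentNormInfInf (μ : Measure X) (s α : ℝ) (f : X × ℝ → ℂ) : ℝ≥0∞ :=
  ⨆ (z : X) (r : ℝ) (_ : 0 < r),
    μ (ball z r) ^ (-α) *
      essSup (fun p => (‖Vpow μ (-s) f p‖₊ : ℝ≥0∞)) ((muPlus μ).restrict (tent z r))

/-- `‖V^{-s} f‖_{L^∞(X⁺)}`. -/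
def linfNormPlus (μ : Measure X) (s : ℝ) (f : X × ℝ → ℂ) : ℝ≥0∞ :=
  essSup (fun p => (‖Vpow μ (-s) f p‖₊ : ℝ≥0∞)) (muPlus μ)

/-- The quasinorm of `T^{p,q}_s` for `p, q ∈ (0,∞]` (with `α = 0` when `p = ∞`,
and with `‖V^{-s}f‖_{L^∞(X⁺)}` when `p = q = ∞`). -/
def TNE (μ : Measure X) (p q : ℝ≥0∞) (s : ℝ) (f : X × ℝ → ℂ) : ℝ≥0∞ :=
  if p = ∞ then
    (if q = ∞ then linfNormPlus μ s f else tentNormPInf μ q.toReal s 0 f)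
  else (∫⁻ x, AqE μ q (Vpow μ (-s) f) x ^ p.toReal ∂μ) ^ (1/p.toReal)

/-- The norm of `L^q_s(X⁺)`, i.e. `L^q` with respect to `V^{-qs-1} dμ dt/t`. -/
def LqsNorm (μ : Measure X) (q s : ℝ) (f : X × ℝ → ℂ) : ℝ≥0∞ :=
  (∫⁻ p, (‖f p‖₊ : ℝ≥0∞) ^ q * vol μ p.1 p.2 ^ (-(q*s)) / vol μ p.1 p.2 ∂muPlus μ) ^ (1/q)

/-- `L^q` norm with respect to a measure. -/
def LqNorm {α : Type*} [MeasurableSpace α] (ν : Measure α) (q : ℝ) (f : α → ℂ) : ℝ≥0∞ :=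
  (∫⁻ x, (‖f x‖₊ : ℝ≥0∞) ^ q ∂ν) ^ (1/q)

/-- Nondegeneracy of a metric measure space. -/
def Nondeg (μ : Measure X) : Prop :=
  ∀ (x : X) (r : ℝ), 0 < r → 0 < μ (ball x r) ∧ μ (ball x r) < ∞

/-- The doubling condition. -/
def Doubling (μ : Measure X) : Prop :=
  ∃ C : ℝ≥0∞, 1 ≤ C ∧ C < ∞ ∧ ∀ (x : X) (r : ℝ), 0 < r → μ (ball x (2*r)) ≤ C * μ (ball x r)

/-- AD-regularity of dimension `n` (for all radii, as appropriate for unbounded spaces). -/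
def ADRegular (μ : Measure X) (n : ℝ) : Prop :=
  ∃ C : ℝ≥0∞, 1 ≤ C ∧ C < ∞ ∧ ∀ (x : X) (r : ℝ), 0 < r →
    ENNReal.ofReal (r ^ n) ≤ C * μ (ball x r) ∧ μ (ball x r) ≤ C * ENNReal.ofReal (r ^ n)

/-- Metric unboundedness. -/
def MetricUnbounded (X : Type*) [MetricSpace X] : Prop :=
  ∀ R : ℝ, ∃ x y : X, R < dist x y

/-- A function on `X⁺` is cylindrically supported if it vanishes a.e. outside a cylinder. -/
def CylSupported (μ : Measure X) (f : X × ℝ → ℂ) : Prop :=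
  ∃ (z : X) (r a b : ℝ), 0 < r ∧ 0 < a ∧ a < b ∧
    ∀ᵐ p ∂muPlus μ, p ∉ ball z r ×ˢ Ioo a b → f p = 0

/-- The K-functional associated with two quasinorms on functions. -/
def Kfun {α : Type*} [MeasurableSpace α] (ν : Measure α)
    (N₀ N₁ : (α → ℂ) → ℝ≥0∞) (t : ℝ≥0∞) (f : α → ℂ) : ℝ≥0∞ :=
  ⨅ (g : α → ℂ) (h : α → ℂ) (_ : f =ᵐ[ν] g + h), N₀ g + t * N₁ h

/-- The real interpolation quasinorm `‖f‖_{(A₀,A₁)_{θ,p}}`, continuous form. -/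
def interpNorm {α : Type*} [MeasurableSpace α] (ν : Measure α)
    (N₀ N₁ : (α → ℂ) → ℝ≥0∞) (θ p : ℝ) (f : α → ℂ) : ℝ≥0∞ :=
  (∫⁻ t in Ioi (0:ℝ),
      (ENNReal.ofReal (t ^ (-θ)) * Kfun ν N₀ N₁ (ENNReal.ofReal t) f) ^ p *
        ENNReal.ofReal t⁻¹) ^ (1/p)

/-- The real interpolation quasinorm, discrete form. -/
def interpNormD {α : Type*} [MeasurableSpace α] (ν : Measure α)
    (N₀ N₁ : (α → ℂ) → ℝ≥0∞) (θ p : ℝ) (f : α → ℂ) : ℝ≥0∞ :=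
  (∑' k : ℤ, (ENNReal.ofReal ((2:ℝ) ^ (-(k:ℝ) * θ)) *
      Kfun ν N₀ N₁ (ENNReal.ofReal ((2:ℝ) ^ (k:ℝ))) f) ^ p) ^ (1/p)

/-- The Whitney region `Ω_{c₀,c₁}(x,t)`. -/
def whitney (c₀ c₁ : ℝ) (x : X) (t : ℝ) : Set (X × ℝ) :=
  ball x (c₀ * t) ×ˢ Ioo (t / c₁) (c₁ * t)

/-- The `L^q`-Whitney average `𝒲^q_{c₀,c₁} f (x,t)` (with respect to `dμ(ξ) dτ`). -/
def Wavg (μ : Measure X) (c₀ c₁ q : ℝ) (f : X × ℝ → ℂ) (x : X) (t : ℝ) : ℝ≥0∞ :=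
  (((μ.prod volume) (whitney c₀ c₁ x t))⁻¹ *
      ∫⁻ p in whitney c₀ c₁ x t, (‖f p‖₊ : ℝ≥0∞) ^ q ∂μ.prod volume) ^ (1/q)

/-- The Z-space quasinorm `‖f‖_{Z^{p,q}_s(X;c₀,c₁)}`. -/
def Znorm (μ : Measure X) (p q s c₀ c₁ : ℝ) (f : X × ℝ → ℂ) : ℝ≥0∞ :=
  (∫⁻ w, Wavg μ c₀ c₁ q (Vpow μ (-s) f) w.1 w.2 ^ p ∂muPlus μ) ^ (1/p)



section Aux

variable {μ : Measure X}

lemma lsc_iSup {ι : Sort*} {Y : Type*} [TopologicalSpace Y] {g : ι → Y → ℝ≥0∞}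
    (h : ∀ i, LowerSemicontinuous (g i)) :
    LowerSemicontinuous (fun x => ⨆ i, g i x) := by
  intro x y hy
  obtain ⟨i, hi⟩ := lt_iSup_iff.mp hy
  filter_upwards [h i x y hi] with x' hx'
  exact hx'.trans_le (le_iSup (fun j => g j x') i)

lemma lsc_ball_sup (g : X → ℝ → ℝ≥0∞) :
    LowerSemicontinuous
      (fun x : X => ⨆ (z : X) (r : ℝ) (_ : 0 < r ∧ x ∈ ball z r), g z r) := by
  refine lsc_iSup fun z => lsc_iSup fun r => ?_
  intro x y hy
  obtain ⟨hp, hc⟩ := lt_iSup_iff.mp hy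
  filter_upwards [isOpen_ball.mem_nhds hp.2] with x' hx'
  exact lt_of_lt_of_le hc (le_iSup_of_le ⟨hp.1, hx'⟩ le_rfl)

lemma lintegral_iUnion_monotone {α : Type*} [MeasurableSpace α] (ν : Measure α)
    {S : ℕ → Set α} (hm : ∀ n, MeasurableSet (S n)) (hmono : Monotone S) (F : α → ℝ≥0∞) :
    ∫⁻ a in ⋃ n, S n, F a ∂ν = ⨆ n, ∫⁻ a in S n, F a ∂ν := by
  refine le_antisymm ?_ (iSup_le fun n =>
    lintegral_mono' (Measure.restrict_mono (subset_iUnion S n) le_rfl) le_rfl)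
  rw [← iUnion_disjointed,
    lintegral_iUnion (MeasurableSet.disjointed hm) (disjoint_disjointed S),
    ENNReal.tsum_eq_iSup_sum]
  refine iSup_le fun t => ?_
  rw [← lintegral_biUnion_finset ((disjoint_disjointed S).set_pairwise _)
    (fun n _ => MeasurableSet.disjointed hm n) F]
  refine le_trans (lintegral_mono' (Measure.restrict_mono ?_ le_rfl) le_rfl)
    (le_iSup (fun n => ∫⁻ a in S n, F a ∂ν) (t.sup id))
  exact iUnion₂_subset fun n hn =>
    (disjointed_subset S n).trans (hmono (Finset.le_sup (f := id) hn))

/-- Shrunken cones. -/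
def coneA (x : X) (n : ℕ) : Set (X × ℝ) := {p | dist x p.1 + 1 / ((n : ℝ) + 1) < p.2}

lemma coneA_measurable [BorelSpace X] (x : X) (n : ℕ) : MeasurableSet (coneA x n) := by
  have h1 : Measurable fun p : X × ℝ => dist x p.1 :=
    (continuous_const.dist continuous_id).measurable.comp measurable_fst
  exact measurableSet_lt (h1.add measurable_const) measurable_snd

lemma coneA_mono (x : X) : Monotone (coneA x) := by
  intro n m hnm p hp
  have hc : ((n : ℝ) + 1) ≤ (m : ℝ) + 1 := by
    exact_mod_cast add_le_add_left (Nat.cast_le.mpr hnm) 1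
  have hpos : (0 : ℝ) < (n : ℝ) + 1 := by positivity
  exact lt_of_le_of_lt (add_le_add_right (one_div_le_one_div_of_le hpos hc) _) hp

lemma cone_eq_iUnion (x : X) : cone x = ⋃ n, coneA x n := by
  ext p
  simp only [cone, coneA, mem_setOf_eq, mem_iUnion]
  constructor
  · intro h
    obtain ⟨n, hn⟩ := exists_nat_one_div_lt (sub_pos.mpr h)
    exact ⟨n, by linarith⟩
  · rintro ⟨n, hn⟩
    have : (0 : ℝ) < 1 / ((n : ℝ) + 1) := by positivity
    linarith

lemma coneA_subset_cone {x x' : X} {n : ℕ} (h : dist x' x < 1 / ((n : ℝ) + 1)) :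
    coneA x n ⊆ cone x' := by
  intro p hp
  have hp' : dist x p.1 + 1 / ((n : ℝ) + 1) < p.2 := hp
  have := dist_triangle x' x p.1
  simp only [cone, mem_setOf_eq]
  linarith

lemma cone_measurable [BorelSpace X] (x : X) : MeasurableSet (cone x) := by
  rw [cone_eq_iUnion]
  exact MeasurableSet.iUnion (coneA_measurable x)

lemma lsc_lintegral_cone [BorelSpace X] (ν : Measure (X × ℝ)) (F : X × ℝ → ℝ≥0∞) :
    LowerSemicontinuous (fun x : X => ∫⁻ p in cone x, F p ∂ν) := by
  intro x y hy
  have hy' : y < ⨆ n, ∫⁻ p in coneA x n, F p ∂ν := by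
    rw [← lintegral_iUnion_monotone ν (coneA_measurable x) (coneA_mono x), ← cone_eq_iUnion]
    exact hy
  obtain ⟨n, hn⟩ := lt_iSup_iff.mp hy'
  have hpos : (0 : ℝ) < 1 / ((n : ℝ) + 1) := by positivity
  filter_upwards [Metric.ball_mem_nhds x hpos] with x' hx'
  refine lt_of_lt_of_le hn (lintegral_mono' (Measure.restrict_mono ?_ le_rfl) le_rfl)
  exact coneA_subset_cone (by simpa [dist_comm] using hx')

lemma lsc_essSup_cone [BorelSpace X] (ν : Measure (X × ℝ)) {g : X × ℝ → ℝ≥0∞}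
    (hg : Measurable g) :
    LowerSemicontinuous (fun x : X => essSup g (ν.restrict (cone x))) := by
  intro x y hy
  set A : Set (X × ℝ) := {p | y < g p} with hA
  have hAm : MeasurableSet A := measurableSet_lt measurable_const hg
  have h0 : ν.restrict (cone x) A ≠ 0 := by
    intro h
    have hae : ∀ᵐ p ∂ν.restrict (cone x), g p ≤ y := by
      rw [ae_iff]
      simpa [A, not_le] using h
    exact absurd hy (not_lt.mpr (essSup_le_of_ae_le y hae))
  rw [Measure.restrict_apply hAm, cone_eq_iUnion, inter_iUnion] at h0
  have h1 : ∃ n, ν (A ∩ coneA x n) ≠ 0 := by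
    by_contra h
    push_neg at h
    exact h0 (measure_iUnion_null h)
  obtain ⟨n, hn⟩ := h1
  have h2 : y < essSup g (ν.restrict (coneA x n)) := by
    by_contra h
    push_neg at h
    have hae : ∀ᵐ p ∂ν.restrict (coneA x n), g p ≤ y := by
      filter_upwards [ae_le_essSup g] with p hp using hp.trans h
    rw [ae_iff] at hae
    simp only [not_le] at hae
    rw [Measure.restrict_apply hAm] at hae
    exact hn hae
  have hpos : (0 : ℝ) < 1 / ((n : ℝ) + 1) := by positivity
  filter_upwards [Metric.ball_mem_nhds x hpos] with x' hx'
  refine lt_of_lt_of_le h2 (essSup_mono_measure' (Measure.restrict_mono ?_ le_rfl))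
  exact coneA_subset_cone (by simpa [dist_comm] using hx')

end Aux

/-- For `q ∈ (0,∞]` and `α ∈ ℝ`, the functions `𝒜^q f` and `𝒞^q_α f`
are lower semicontinuous on `X`. -/
theorem stmt0 {X : Type*} [MetricSpace X] [MeasurableSpace X] [BorelSpace X] [Nonempty X]
    (μ : Measure X) (hμ : Nondeg μ) (q : ℝ≥0∞) (hq : 0 < q) (α : ℝ)
    (f : X × ℝ → ℂ) (hf : Measurable f) :
    LowerSemicontinuous (AqE μ q f) ∧ LowerSemicontinuous (CqE μ q α f) := by
  constructor
  · by_cases hq' : q = ∞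
    · rw [show AqE μ q f = Ainf μ f from funext fun x => if_pos hq']
      exact lsc_essSup_cone (muPlus μ) hf.nnnorm.coe_nnreal_ennreal
    · rw [show AqE μ q f = Aq μ q.toReal f from funext fun x => if_neg hq']
      have hqt : 0 < 1 / q.toReal := by
        have := ENNReal.toReal_pos hq.ne' hq'
        positivity
      unfold Aq
      refine Continuous.comp_lowerSemicontinuous
        (ENNReal.continuous_rpow_const) (lsc_lintegral_cone (muPlus μ) _) ?_
      exact fun a b hab => ENNReal.rpow_le_rpow hab hqt.le
  · by_cases hq' : q = ∞
    · rw [show CqE μ q α f = Cinf μ α f from funext fun x => if_pos hq']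
      exact lsc_ball_sup _
    · rw [show CqE μ q α f = Cq μ q.toReal α f from funext fun x => if_neg hq']
      exact lsc_ball_sup _

end WTS
end
end

section
/- Let p,q ∈ (0,∞), let f be measurable on X⁺ with ‖f‖_{T^{p,q}} < ∞, fix x₀ ∈ X, and for each integer k ≥ 1 set f_k := 1_{B(x₀,k)×(k^{−1},k)} · f. Then lim_{k→∞} ‖f − f_k‖_{T^{p,q}} = 0. In particular, the cylindrically supported functions in T^{p,q} are dense in T^{p,q}. -/
open MeasureTheory Metric Set Filter ENNReal
open scoped NNReal Topology

noncomputable section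

namespace WTS

variable {X : Type*} [MetricSpace X] [MeasurableSpace X]

section AuxStmt1

variable {X : Type*} [MetricSpace X] [MeasurableSpace X] [BorelSpace X]

lemma isOpen_cone (x : X) : IsOpen (cone x) :=
  isOpen_lt (continuous_const.dist continuous_fst) continuous_snd

lemma measurableSet_cone (x : X) : MeasurableSet (cone x) :=
  (isOpen_cone x).measurableSet

lemma lsc_vol (μ : Measure X) : LowerSemicontinuous fun w : X × ℝ => vol μ w.1 w.2 := by
  rintro ⟨x, t⟩ y hy
  simp only [vol] at hy
  rcases le_or_gt t 0 with ht | ht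
  · rw [ball_eq_empty.2 ht, measure_empty] at hy
    exact absurd hy (not_lt_of_ge zero_le)
  · have hmono : Monotone fun n : ℕ => ball x (t - t / (n + 2)) := by
      intro m n hmn
      apply ball_subset_ball
      have h1 : t / ((n:ℝ) + 2) ≤ t / ((m:ℝ) + 2) := by
        apply div_le_div_of_nonneg_left ht.le (by positivity)
        have : (m:ℝ) ≤ (n:ℝ) := Nat.cast_le.2 hmn
        linarith
      linarith
    have hunion : (⋃ n : ℕ, ball x (t - t / (n + 2))) = ball x t := by
      apply Subset.antisymm
      · refine iUnion_subset fun n => ball_subset_ball ?_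
        have : (0:ℝ) < t / ((n:ℝ) + 2) := by positivity
        linarith
      · intro z hz
        rw [mem_ball] at hz
        obtain ⟨n, hn⟩ := exists_nat_gt (t / (t - dist z x))
        refine mem_iUnion.2 ⟨n, ?_⟩
        rw [mem_ball]
        have h1 : 0 < t - dist z x := by linarith
        have h2 : t / ((n:ℝ) + 2) < t - dist z x := by
          rw [div_lt_iff₀ (by positivity)]
          have hmul := mul_lt_mul_of_pos_right hn h1
          rw [div_mul_cancel₀ t h1.ne'] at hmul
          nlinarith
        linarith
    have hsup : μ (ball x t) = ⨆ n : ℕ, μ (ball x (t - t / (n + 2))) := by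
      rw [← hunion, hmono.directed_le.measure_iUnion]
    rw [hsup] at hy
    obtain ⟨n, hn⟩ := lt_iSup_iff.1 hy
    have hδpos : 0 < t / ((n:ℝ) + 2) := by positivity
    set δ := t / ((n:ℝ) + 2) with hδ
    rw [Metric.eventually_nhds_iff]
    refine ⟨δ / 2, by positivity, fun w' hw' => ?_⟩
    rw [Prod.dist_eq, max_lt_iff] at hw'
    obtain ⟨hw1, hw2⟩ := hw'
    rw [Real.dist_eq, abs_lt] at hw2
    have hsub : ball x (t - δ) ⊆ ball w'.1 w'.2 := by
      intro z hz
      rw [mem_ball] at hz ⊢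
      have htri : dist z w'.1 ≤ dist z x + dist x w'.1 := dist_triangle _ _ _
      have hxw : dist x w'.1 < δ / 2 := by rw [dist_comm]; exact hw1
      have : dist z w'.1 < t - δ / 2 := by linarith
      linarith [hw2.1, hw2.2]
    exact hn.trans_le (measure_mono hsub)

lemma measurable_vol (μ : Measure X) : Measurable fun w : X × ℝ => vol μ w.1 w.2 :=
  (lsc_vol μ).measurable

lemma lsc_coneIntegral (μ : Measure X) {F : X × ℝ → ℝ≥0∞} (hF : Measurable F) :
    LowerSemicontinuous fun x : X => ∫⁻ w in cone x, F w ∂muPlus μ := by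
  have Kmeas : ∀ (x : X) (n : ℕ),
      MeasurableSet {w : X × ℝ | dist x w.1 + ((n:ℝ) + 1)⁻¹ < w.2} :=
    fun x n => (isOpen_lt ((continuous_const.dist continuous_fst).add continuous_const)
      continuous_snd).measurableSet
  have key : ∀ x : X, (∫⁻ w in cone x, F w ∂muPlus μ)
      = ⨆ n : ℕ, ∫⁻ w in {w : X × ℝ | dist x w.1 + ((n:ℝ) + 1)⁻¹ < w.2}, F w ∂muPlus μ := by
    intro x
    set s : ℕ → Set (X × ℝ) := fun n => {w : X × ℝ | dist x w.1 + ((n:ℝ) + 1)⁻¹ < w.2} with hs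
    have hmono : Monotone s := by
      intro m n hmn w hw
      simp only [hs, mem_setOf_eq] at hw ⊢
      have h1 : ((n:ℝ) + 1)⁻¹ ≤ ((m:ℝ) + 1)⁻¹ := by
        apply inv_anti₀ (by positivity)
        have : (m:ℝ) ≤ (n:ℝ) := Nat.cast_le.2 hmn
        linarith
      linarith
    have hunion : (⋃ n : ℕ, s n) = cone x := by
      apply Subset.antisymm
      · refine iUnion_subset fun n w hw => ?_
        simp only [hs, mem_setOf_eq] at hw
        have : (0:ℝ) < ((n:ℝ) + 1)⁻¹ := by positivity
        show dist x w.1 < w.2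
        linarith
      · intro w hw
        have hw' : dist x w.1 < w.2 := hw
        obtain ⟨n, hn⟩ := exists_nat_gt (w.2 - dist x w.1)⁻¹
        refine mem_iUnion.2 ⟨n, ?_⟩
        simp only [hs, mem_setOf_eq]
        have h1 : 0 < w.2 - dist x w.1 := by linarith
        have h2 : ((n:ℝ) + 1)⁻¹ < w.2 - dist x w.1 := by
          rw [inv_lt_comm₀ (by positivity) h1] at *
          · linarith
        linarith
    have hind : ∀ w, (⋃ n, s n).indicator F w = ⨆ n : ℕ, (s n).indicator F w := by
      intro w
      by_cases hw : w ∈ ⋃ n, s n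
      · obtain ⟨n, hn⟩ := mem_iUnion.1 hw
        rw [Set.indicator_of_mem hw]
        refine le_antisymm (le_iSup_of_le n (by rw [Set.indicator_of_mem hn])) (iSup_le fun m => ?_)
        by_cases hm : w ∈ s m
        · rw [Set.indicator_of_mem hm]
        · rw [Set.indicator_of_notMem hm]; exact zero_le
      · have hnm : ∀ m, w ∉ s m := fun m hm => hw (mem_iUnion.2 ⟨m, hm⟩)
        rw [Set.indicator_of_notMem hw]
        simp [Set.indicator_of_notMem (hnm _)]
    calc ∫⁻ w in cone x, F w ∂muPlus μ
        = ∫⁻ w, (⋃ n, s n).indicator F w ∂muPlus μ := by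
          rw [lintegral_indicator (MeasurableSet.iUnion (Kmeas x)), hunion]
      _ = ∫⁻ w, ⨆ n : ℕ, (s n).indicator F w ∂muPlus μ := lintegral_congr hind
      _ = ⨆ n : ℕ, ∫⁻ w, (s n).indicator F w ∂muPlus μ := by
          refine lintegral_iSup (fun n => hF.indicator (Kmeas x n)) (fun m n h w => ?_)
          exact Set.indicator_le_indicator_of_subset (hmono h) (fun a => zero_le) w
      _ = ⨆ n : ℕ, ∫⁻ w in s n, F w ∂muPlus μ := by
          exact iSup_congr fun n => lintegral_indicator (Kmeas x n) F
  intro x y hy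
  simp only [] at hy
  rw [key x] at hy
  obtain ⟨n, hn⟩ := lt_iSup_iff.1 hy
  rw [Metric.eventually_nhds_iff]
  refine ⟨((n:ℝ) + 1)⁻¹, by positivity, fun x' hx' => ?_⟩
  refine hn.trans_le (lintegral_mono_set fun w hw => ?_)
  simp only [mem_setOf_eq] at hw
  have htri : dist x' w.1 ≤ dist x' x + dist x w.1 := dist_triangle _ _ _
  show dist x' w.1 < w.2
  linarith

lemma measurable_coneIntegral (μ : Measure X) {F : X × ℝ → ℝ≥0∞} (hF : Measurable F) :
    Measurable fun x : X => ∫⁻ w in cone x, F w ∂muPlus μ :=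
  (lsc_coneIntegral μ hF).measurable


lemma tendsto_tentNorm_indicator_compl (μ : Measure X) {p q : ℝ} (hp : 0 < p) (hq : 0 < q)
    {f : X × ℝ → ℂ} (hf : Measurable f) (hfin : tentNorm μ p q f < ∞)
    {S : ℕ → Set (X × ℝ)} (hSm : ∀ k, MeasurableSet (S k))
    (hS : ∀ w : X × ℝ, 0 < w.2 → ∀ᶠ k in atTop, w ∈ S k) :
    Tendsto (fun k : ℕ => tentNorm μ p q ((S k)ᶜ.indicator f)) atTop (𝓝 0) := by
  have hvol := measurable_vol (X := X) μ
  have hGm : Measurable fun w : X × ℝ => (‖f w‖₊ : ℝ≥0∞) ^ q / vol μ w.1 w.2 :=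
    (ENNReal.continuous_rpow_const.measurable.comp hf.nnnorm.coe_nnreal_ennreal).div hvol
  have hFm : ∀ k : ℕ, Measurable fun w : X × ℝ =>
      (‖(S k)ᶜ.indicator f w‖₊ : ℝ≥0∞) ^ q / vol μ w.1 w.2 := fun k =>
    (ENNReal.continuous_rpow_const.measurable.comp
      (hf.indicator (hSm k).compl).nnnorm.coe_nnreal_ennreal).div hvol
  have hFG : ∀ (k : ℕ) (w : X × ℝ),
      (‖(S k)ᶜ.indicator f w‖₊ : ℝ≥0∞) ^ q / vol μ w.1 w.2
        ≤ (‖f w‖₊ : ℝ≥0∞) ^ q / vol μ w.1 w.2 := by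
    intro k w
    refine ENNReal.div_le_div_right (ENNReal.rpow_le_rpow ?_ hq.le) _
    exact ENNReal.coe_le_coe.2 (by exact_mod_cast norm_indicator_le_norm_self f w)
  have Ifin : ∫⁻ x, Aq μ q f x ^ p ∂μ ≠ ∞ := by
    intro h
    simp only [tentNorm] at hfin
    rw [h, ENNReal.top_rpow_of_pos (by positivity)] at hfin
    exact lt_irrefl _ hfin
  have hAqm : Measurable (Aq μ q f) := by
    unfold Aq
    exact ENNReal.continuous_rpow_const.measurable.comp (measurable_coneIntegral μ hGm)
  have hfinae : ∀ᵐ x ∂μ,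
      (∫⁻ w in cone x, (‖f w‖₊ : ℝ≥0∞) ^ q / vol μ w.1 w.2 ∂muPlus μ) ≠ ∞ := by
    have h1 : ∀ᵐ x ∂μ, Aq μ q f x ^ p < ∞ :=
      ae_lt_top (ENNReal.continuous_rpow_const.measurable.comp hAqm) Ifin
    filter_upwards [h1] with x hx h3
    have h4 : Aq μ q f x = ∞ := by
      unfold Aq
      rw [h3, ENNReal.top_rpow_of_pos (by positivity)]
    rw [h4, ENNReal.top_rpow_of_pos hp] at hx
    exact lt_irrefl _ hx
  have hinner : ∀ᵐ x ∂μ, Tendsto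
      (fun k : ℕ => ∫⁻ w in cone x,
        (‖(S k)ᶜ.indicator f w‖₊ : ℝ≥0∞) ^ q / vol μ w.1 w.2 ∂muPlus μ) atTop (𝓝 0) := by
    filter_upwards [hfinae] with x hx
    have h0 : Tendsto (fun k : ℕ => ∫⁻ w in cone x,
        (‖(S k)ᶜ.indicator f w‖₊ : ℝ≥0∞) ^ q / vol μ w.1 w.2 ∂muPlus μ) atTop
        (𝓝 (∫⁻ _w in cone x, (0:ℝ≥0∞) ∂muPlus μ)) := by
      refine tendsto_lintegral_of_dominated_convergence _ (fun k => (hFm k))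
        (fun k => ae_of_all _ (hFG k)) hx ?_
      refine (ae_restrict_iff' (measurableSet_cone x)).2 (ae_of_all _ fun w hw => ?_)
      have hw2 : 0 < w.2 := lt_of_le_of_lt dist_nonneg hw
      have hev : ∀ᶠ k : ℕ in atTop,
          (‖(S k)ᶜ.indicator f w‖₊ : ℝ≥0∞) ^ q / vol μ w.1 w.2 = 0 := by
        filter_upwards [hS w hw2] with k hk
        rw [Set.indicator_of_notMem (by simp [hk])]
        simp [ENNReal.zero_rpow_of_pos hq]
      exact Tendsto.congr' (hev.mono fun k hk => hk.symm) tendsto_const_nhds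
    simpa using h0
  have houter : Tendsto (fun k : ℕ => ∫⁻ x, (∫⁻ w in cone x,
      (‖(S k)ᶜ.indicator f w‖₊ : ℝ≥0∞) ^ q / vol μ w.1 w.2 ∂muPlus μ) ^ (1/q * p) ∂μ)
      atTop (𝓝 0) := by
    have h0 : Tendsto (fun k : ℕ => ∫⁻ x, (∫⁻ w in cone x,
        (‖(S k)ᶜ.indicator f w‖₊ : ℝ≥0∞) ^ q / vol μ w.1 w.2 ∂muPlus μ) ^ (1/q * p) ∂μ)
        atTop (𝓝 (∫⁻ _x, (0:ℝ≥0∞) ∂μ)) := by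
      refine tendsto_lintegral_of_dominated_convergence (fun x => Aq μ q f x ^ p)
        (fun k => ENNReal.continuous_rpow_const.measurable.comp
          (measurable_coneIntegral μ (hFm k)))
        (fun k => ae_of_all _ fun x => ?_) Ifin ?_
      · dsimp only
        rw [ENNReal.rpow_mul]
        refine ENNReal.rpow_le_rpow ?_ hp.le
        exact ENNReal.rpow_le_rpow (lintegral_mono fun w => hFG k w) (by positivity)
      · filter_upwards [hinner] with x hx
        have h2 := hx.ennrpow_const (1/q * p)
        rw [ENNReal.zero_rpow_of_pos (show (0:ℝ) < 1/q * p by positivity)] at h2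
        exact h2
    simpa using h0
  have heq : ∀ k : ℕ, tentNorm μ p q ((S k)ᶜ.indicator f)
      = (∫⁻ x, (∫⁻ w in cone x,
          (‖(S k)ᶜ.indicator f w‖₊ : ℝ≥0∞) ^ q / vol μ w.1 w.2 ∂muPlus μ) ^ (1/q * p) ∂μ)
        ^ (1/p) := by
    intro k
    simp only [tentNorm, Aq]
    congr 1
    refine lintegral_congr fun x => ?_
    rw [ENNReal.rpow_mul]
  have hfin2 := houter.ennrpow_const (1/p)
  rw [ENNReal.zero_rpow_of_pos (by positivity)] at hfin2
  refine Tendsto.congr (fun k => ?_) hfin2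
  exact (heq k).symm

end AuxStmt1

/-- Truncations of `f ∈ T^{p,q}` to cylinders converge to `f` in `T^{p,q}`;
in particular cylindrically supported functions are dense in `T^{p,q}`. -/
theorem stmt1 {X : Type*} [MetricSpace X] [MeasurableSpace X] [BorelSpace X] [Nonempty X]
    (μ : Measure X) (hμ : Nondeg μ) (p q : ℝ) (hp : 0 < p) (hq : 0 < q)
    (f : X × ℝ → ℂ) (hf : Measurable f) (hfin : tentNorm μ p q f < ∞) (x₀ : X) :
    Tendsto (fun k : ℕ => tentNorm μ p q fun w =>
        f w - (ball x₀ (k : ℝ) ×ˢ Ioo ((k : ℝ)⁻¹) (k : ℝ)).indicator f w)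
      atTop (𝓝 0) ∧
    ∀ ε : ℝ≥0∞, 0 < ε → ∃ g : X × ℝ → ℂ, CylSupported μ g ∧ tentNorm μ p q g < ∞ ∧
      tentNorm μ p q (fun w => f w - g w) < ε := by
  have hSm : ∀ k : ℕ, MeasurableSet (ball x₀ (k : ℝ) ×ˢ Ioo ((k : ℝ)⁻¹) (k : ℝ)) :=
    fun k => measurableSet_ball.prod measurableSet_Ioo
  have hS : ∀ w : X × ℝ, 0 < w.2 →
      ∀ᶠ k : ℕ in atTop, w ∈ ball x₀ (k : ℝ) ×ˢ Ioo ((k : ℝ)⁻¹) (k : ℝ) := by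
    intro w hw2
    obtain ⟨N₁, hN₁⟩ := exists_nat_gt (dist w.1 x₀)
    obtain ⟨N₂, hN₂⟩ := exists_nat_gt w.2
    obtain ⟨N₃, hN₃⟩ := exists_nat_gt w.2⁻¹
    filter_upwards [eventually_ge_atTop N₁, eventually_ge_atTop N₂, eventually_ge_atTop N₃]
      with k h1 h2 h3
    have c1 : dist w.1 x₀ < (k:ℝ) := hN₁.trans_le (Nat.cast_le.2 h1)
    have c2 : w.2 < (k:ℝ) := hN₂.trans_le (Nat.cast_le.2 h2)
    have c3 : w.2⁻¹ < (k:ℝ) := hN₃.trans_le (Nat.cast_le.2 h3)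
    have hk0 : (0:ℝ) < k := lt_trans (inv_pos.2 hw2) c3
    refine Set.mem_prod.2 ⟨mem_ball.2 c1, ?_, c2⟩
    rwa [inv_lt_comm₀ hk0 hw2]
  have hres : ∀ k : ℕ, (fun w => f w - (ball x₀ (k:ℝ) ×ˢ Ioo ((k:ℝ)⁻¹) (k:ℝ)).indicator f w)
      = (ball x₀ (k:ℝ) ×ˢ Ioo ((k:ℝ)⁻¹) (k:ℝ))ᶜ.indicator f := by
    intro k; funext w
    by_cases h : w ∈ ball x₀ (k:ℝ) ×ˢ Ioo ((k:ℝ)⁻¹) (k:ℝ) <;>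
      simp [Set.indicator_apply, h]
  have htend : Tendsto (fun k : ℕ => tentNorm μ p q fun w =>
      f w - (ball x₀ (k : ℝ) ×ˢ Ioo ((k : ℝ)⁻¹) (k : ℝ)).indicator f w) atTop (𝓝 0) := by
    have h := tendsto_tentNorm_indicator_compl μ hp hq hf hfin hSm hS
    refine h.congr fun k => ?_
    rw [hres k]
  refine ⟨htend, fun ε hε => ?_⟩
  obtain ⟨k, hk, hk2⟩ := ((htend.eventually (Iio_mem_nhds hε)).and (eventually_ge_atTop 2)).exists
  refine ⟨(ball x₀ (k:ℝ) ×ˢ Ioo ((k:ℝ)⁻¹) (k:ℝ)).indicator f, ?_, ?_, hk⟩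
  · have hk2' : (2:ℝ) ≤ k := by exact_mod_cast hk2
    have hk1 : (1:ℝ) < k := by linarith
    have hk0 : (0:ℝ) < k := by linarith
    refine ⟨x₀, k, (k:ℝ)⁻¹, k, hk0, inv_pos.2 hk0, ?_, ?_⟩
    · exact lt_trans ((inv_lt_one₀ hk0).2 hk1) hk1
    · exact ae_of_all _ fun w hw => Set.indicator_of_notMem hw f
  · refine lt_of_le_of_lt ?_ hfin
    simp only [tentNorm]
    refine ENNReal.rpow_le_rpow (lintegral_mono fun x => ?_) (by positivity)
    refine ENNReal.rpow_le_rpow ?_ hp.le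
    simp only [Aq]
    refine ENNReal.rpow_le_rpow (lintegral_mono fun w => ?_) (by positivity)
    refine ENNReal.div_le_div_right (ENNReal.rpow_le_rpow ?_ hq.le) _
    exact ENNReal.coe_le_coe.2 (by exact_mod_cast norm_indicator_le_norm_self f w)


end WTS
end
end

section
/- Suppose X is doubling and q ∈ [1,∞). If f ∈ L^q_c(X⁺), then the function 𝒜^q f : X → [0,∞) is continuous; moreover 𝒜^q f(x) ≤ C ‖f‖_{L^q(X⁺)} for all x ∈ X, where C depends only on X and a cylinder outside of which f vanishes a.e. -/
open MeasureTheory Metric Set Filter ENNReal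
open scoped NNReal Topology

noncomputable section

namespace WTS

variable {X : Type*} [MetricSpace X] [MeasurableSpace X]

instance : SFinite tMeasure := by
  unfold tMeasure; infer_instance

lemma tMeasure_singleton (c : ℝ) : tMeasure {c} = 0 := by
  unfold tMeasure
  refine withDensity_absolutelyContinuous _ _ ?_
  rw [Measure.restrict_apply (measurableSet_singleton c)]
  exact measure_mono_null inter_subset_left (Real.volume_singleton)

/-- If `X` is doubling, `q ∈ [1,∞)` and `f ∈ L^q_c(X⁺)` (supported in a
fixed cylinder), then `𝒜^q f` is continuous, and `𝒜^q f(x) ≤ C ‖f‖_{L^q(X⁺)}` with `C`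
depending only on `X` and the cylinder. -/
theorem stmt12 {X : Type*} [MetricSpace X] [MeasurableSpace X] [BorelSpace X] [Nonempty X]
    (μ : Measure X) (hμ : Nondeg μ) (hd : Doubling μ) (q : ℝ) (hq : 1 ≤ q)
    (z : X) (r a b : ℝ) (hr : 0 < r) (ha : 0 < a) (hab : a < b) :
    ∃ C : ℝ≥0∞, C < ∞ ∧ ∀ f : X × ℝ → ℂ, Measurable f →
      (∫⁻ w, (‖f w‖₊ : ℝ≥0∞) ^ q ∂muPlus μ) < ∞ →
      (∀ᵐ w ∂muPlus μ, w ∉ ball z r ×ˢ Ioo a b → f w = 0) →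
      Continuous (Aq μ q f) ∧
        ∀ x, Aq μ q f x ≤ C * (∫⁻ w, (‖f w‖₊ : ℝ≥0∞) ^ q ∂muPlus μ) ^ (1/q) := by
  classical
  obtain ⟨C₀, hC₀1, hC₀fin, hC₀⟩ := hd
  obtain ⟨n, hn⟩ : ∃ n : ℕ, 2 * r ≤ 2 ^ n * a := by
    obtain ⟨n, hn⟩ := pow_unbounded_of_one_lt (R := ℝ) (2 * r / a) one_lt_two
    refine ⟨n, ?_⟩
    rw [div_lt_iff₀ ha] at hn
    nlinarith
  have hq0 : (0 : ℝ) < q := lt_of_lt_of_le one_pos hq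
  have hμzr0 : μ (ball z r) ≠ 0 := (hμ z r hr).1.ne'
  have hCpow_ne_top : (C₀ ^ n : ℝ≥0∞) ≠ ∞ := (ENNReal.pow_lt_top hC₀fin : C₀ ^ n < ∞).ne
  set δ : ℝ≥0∞ := μ (ball z r) / C₀ ^ n with hδdef
  have hδ0 : δ ≠ 0 := (ENNReal.div_pos hμzr0 hCpow_ne_top).ne'
  have hδinv_ne_top : δ⁻¹ ≠ ∞ := ENNReal.inv_ne_top.mpr hδ0
  have hvol : ∀ y, y ∈ ball z r → ∀ t : ℝ, a < t → δ ≤ vol μ y t := by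
    intro y hy t hat
    have hdouble : ∀ k : ℕ, μ (ball y (2 ^ k * a)) ≤ C₀ ^ k * μ (ball y a) := by
      intro k
      induction k with
      | zero => simp
      | succ k ih =>
        have h2 : (2 : ℝ) ^ (k + 1) * a = 2 * (2 ^ k * a) := by ring
        rw [h2]
        calc μ (ball y (2 * (2 ^ k * a))) ≤ C₀ * μ (ball y (2 ^ k * a)) :=
              hC₀ y _ (by positivity)
          _ ≤ C₀ * (C₀ ^ k * μ (ball y a)) := by exact mul_le_mul_right ih C₀
          _ = C₀ ^ (k + 1) * μ (ball y a) := by ring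
    have h1 : μ (ball z r) ≤ μ (ball y (2 ^ n * a)) := by
      apply measure_mono
      intro w hw
      rw [mem_ball] at hw hy ⊢
      calc dist w y ≤ dist w z + dist z y := dist_triangle w z y
        _ = dist w z + dist y z := by rw [dist_comm z y]
        _ < r + r := by linarith
        _ = 2 * r := by ring
        _ ≤ 2 ^ n * a := hn
    have h2 : μ (ball y a) ≤ μ (ball y t) := measure_mono (ball_subset_ball hat.le)
    have h3 : μ (ball z r) ≤ μ (ball y t) * C₀ ^ n := by
      calc μ (ball z r) ≤ C₀ ^ n * μ (ball y a) := h1.trans (hdouble n)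
        _ ≤ C₀ ^ n * μ (ball y t) := mul_le_mul_right h2 _
        _ = μ (ball y t) * C₀ ^ n := mul_comm _ _
    exact ENNReal.div_le_of_le_mul h3
  refine ⟨δ⁻¹ ^ (1 / q), ENNReal.rpow_lt_top_of_nonneg (by positivity) hδinv_ne_top, ?_⟩
  intro f hf hIfin hsupp
  set h : X × ℝ → ℝ≥0∞ := fun p => (‖f p‖₊ : ℝ≥0∞) ^ q / vol μ p.1 p.2 with hh
  have hae : ∀ᵐ p ∂muPlus μ, h p ≤ δ⁻¹ * (‖f p‖₊ : ℝ≥0∞) ^ q := by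
    filter_upwards [hsupp] with p hp
    by_cases hpS : p ∈ ball z r ×ˢ Ioo a b
    · have hv := hvol p.1 hpS.1 p.2 hpS.2.1
      calc h p ≤ (‖f p‖₊ : ℝ≥0∞) ^ q / δ := ENNReal.div_le_div_left hv _
        _ = δ⁻¹ * (‖f p‖₊ : ℝ≥0∞) ^ q := by rw [div_eq_mul_inv, mul_comm]
    · simp [hh, hp hpS, ENNReal.zero_rpow_of_pos hq0]
  have hhI : ∀ s : Set (X × ℝ), ∫⁻ p in s, h p ∂muPlus μ ≤
      δ⁻¹ * ∫⁻ p in s, (‖f p‖₊ : ℝ≥0∞) ^ q ∂muPlus μ := by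
    intro s
    calc ∫⁻ p in s, h p ∂muPlus μ
        ≤ ∫⁻ p in s, δ⁻¹ * (‖f p‖₊ : ℝ≥0∞) ^ q ∂muPlus μ :=
          lintegral_mono_ae (ae_restrict_of_ae hae)
      _ = δ⁻¹ * ∫⁻ p in s, (‖f p‖₊ : ℝ≥0∞) ^ q ∂muPlus μ :=
          lintegral_const_mul' _ _ hδinv_ne_top
  have hGle : ∀ s : Set (X × ℝ), ∫⁻ p in s, h p ∂muPlus μ ≤
      δ⁻¹ * ∫⁻ w, (‖f w‖₊ : ℝ≥0∞) ^ q ∂muPlus μ := by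
    intro s
    refine (hhI s).trans ?_
    exact mul_le_mul_right (setLIntegral_le_lintegral _ _) _
  have hbound : ∀ x, Aq μ q f x ≤
      δ⁻¹ ^ (1 / q) * (∫⁻ w, (‖f w‖₊ : ℝ≥0∞) ^ q ∂muPlus μ) ^ (1 / q) := by
    intro x
    rw [Aq, ← ENNReal.mul_rpow_of_nonneg _ _ (by positivity : (0:ℝ) ≤ 1 / q)]
    exact ENNReal.rpow_le_rpow (hGle _) (by positivity)
  have hGfin : ∀ x, (∫⁻ p in cone x, h p ∂muPlus μ) ≠ ∞ := fun x =>
    ((hGle _).trans_lt (ENNReal.mul_lt_top hδinv_ne_top.lt_top hIfin)).ne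
  refine ⟨?_, hbound⟩
  have hfm : Measurable fun p : X × ℝ => (‖f p‖₊ : ℝ≥0∞) ^ q :=
    ENNReal.continuous_rpow_const.measurable.comp hf.nnnorm.coe_nnreal_ennreal
  set ν : Measure (X × ℝ) := (muPlus μ).withDensity (fun p => (‖f p‖₊ : ℝ≥0∞) ^ q) with hνdef
  have hνuniv : ν univ = ∫⁻ w, (‖f w‖₊ : ℝ≥0∞) ^ q ∂muPlus μ := by
    rw [hνdef, withDensity_apply _ MeasurableSet.univ, Measure.restrict_univ]
  have hG : Continuous fun x => ∫⁻ p in cone x, h p ∂muPlus μ := by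
    rw [continuous_iff_continuousAt]
    intro x₀
    set G : X → ℝ≥0∞ := fun x => ∫⁻ p in cone x, h p ∂muPlus μ with hGdef
    set D : ℕ → Set (X × ℝ) := fun m =>
      {p | p.2 - 1 / ((m : ℝ) + 1) ≤ dist x₀ p.1 ∧ dist x₀ p.1 ≤ p.2 + 1 / ((m : ℝ) + 1)}
      with hDdef
    have hdistm : Measurable fun p : X × ℝ => dist x₀ p.1 :=
      ((continuous_const.dist continuous_id).measurable).comp measurable_fst
    have hDm : ∀ m, MeasurableSet (D m) := by
      intro m
      exact (measurableSet_le (measurable_snd.sub measurable_const) hdistm).inter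
        (measurableSet_le hdistm (measurable_snd.add measurable_const))
    have hanti : Antitone D := by
      intro m m' hmm' p hp
      have hle : 1 / ((m' : ℝ) + 1) ≤ 1 / ((m : ℝ) + 1) := by
        apply one_div_le_one_div_of_le (by positivity)
        exact_mod_cast add_le_add_left (Nat.cast_le.mpr hmm') 1
      exact ⟨le_trans (by linarith) hp.1, hp.2.trans (by linarith)⟩
    have hDinter : ⋂ m, D m = {p : X × ℝ | dist x₀ p.1 = p.2} := by
      ext p
      simp only [mem_iInter, mem_setOf_eq, hDdef]
      constructor
      · intro hp
        have h1 : dist x₀ p.1 ≤ p.2 := by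
          refine le_of_forall_pos_le_add fun ε hε => ?_
          obtain ⟨m, hm⟩ := exists_nat_one_div_lt hε
          exact (hp m).2.trans (by linarith)
        have h2 : p.2 ≤ dist x₀ p.1 := by
          refine le_of_forall_pos_le_add fun ε hε => ?_
          obtain ⟨m, hm⟩ := exists_nat_one_div_lt hε
          have := (hp m).1
          linarith
        exact le_antisymm h1 h2
      · intro hp m
        have hpos : (0 : ℝ) < 1 / ((m : ℝ) + 1) := by positivity
        constructor <;> [linarith [hp]; linarith [hp]]
    have hd0m : MeasurableSet {p : X × ℝ | dist x₀ p.1 = p.2} :=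
      measurableSet_eq_fun hdistm measurable_snd
    have hν0 : ν {p : X × ℝ | dist x₀ p.1 = p.2} = 0 := by
      rw [hνdef, withDensity_apply _ hd0m, ← lintegral_indicator hd0m]
      have heq : ∫⁻ p, ({p : X × ℝ | dist x₀ p.1 = p.2}).indicator
            (fun p => (‖f p‖₊ : ℝ≥0∞) ^ q) p ∂muPlus μ
          = ∫⁻ y, ∫⁻ t, ({p : X × ℝ | dist x₀ p.1 = p.2}).indicator
            (fun p => (‖f p‖₊ : ℝ≥0∞) ^ q) (y, t) ∂tMeasure ∂μ :=
        lintegral_prod _ (hfm.indicator hd0m).aemeasurable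
      rw [heq]
      have hinner : ∀ y : X, (∫⁻ t, ({p : X × ℝ | dist x₀ p.1 = p.2}).indicator
          (fun p => (‖f p‖₊ : ℝ≥0∞) ^ q) (y, t) ∂tMeasure) = 0 := by
        intro y
        have hfun : (fun t => ({p : X × ℝ | dist x₀ p.1 = p.2}).indicator
            (fun p => (‖f p‖₊ : ℝ≥0∞) ^ q) (y, t))
            = fun t => ({dist x₀ y} : Set ℝ).indicator (fun t => (‖f (y, t)‖₊ : ℝ≥0∞) ^ q) t := by
          funext t
          by_cases ht : dist x₀ y = t
          · simp [indicator_apply, Set.mem_setOf_eq, mem_singleton_iff, ht]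
          · simp [indicator_apply, Set.mem_setOf_eq, mem_singleton_iff, ht, Ne.symm ht]
        rw [hfun, lintegral_indicator (measurableSet_singleton _)]
        exact setLIntegral_measure_zero _ _ (tMeasure_singleton _)
      simp only [hinner]
      simp
    have htend0 : Tendsto (fun m => δ⁻¹ * ν (D m)) atTop (𝓝 0) := by
      have hν1 : Tendsto (fun m => ν (D m)) atTop (𝓝 0) := by
        have := tendsto_measure_iInter_atTop (μ := ν)
          (fun m => (hDm m).nullMeasurableSet) hanti
          ⟨0, ((measure_mono (subset_univ _)).trans_lt (by rw [hνuniv]; exact hIfin)).ne⟩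
        rwa [hDinter, hν0] at this
      have := ENNReal.Tendsto.const_mul hν1 (Or.inr hδinv_ne_top)
      simpa using this
    have hDbound : ∀ m : ℕ, ∫⁻ p in D m, h p ∂muPlus μ ≤ δ⁻¹ * ν (D m) := by
      intro m
      refine (hhI (D m)).trans ?_
      rw [hνdef, withDensity_apply _ (hDm m)]
    have key : ∀ m : ℕ, ∀ x : X, dist x x₀ ≤ 1 / ((m : ℝ) + 1) →
        G x ≤ G x₀ + δ⁻¹ * ν (D m) ∧ G x₀ ≤ G x + δ⁻¹ * ν (D m) := by
      intro m x hx
      have hsub1 : cone x \ cone x₀ ⊆ D m := by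
        rintro p ⟨hp1, hp2⟩
        rw [cone, mem_setOf_eq] at hp1
        rw [cone, mem_setOf_eq, not_lt] at hp2
        have hpos : (0 : ℝ) < 1 / ((m : ℝ) + 1) := by positivity
        have htri : dist x₀ p.1 ≤ dist x₀ x + dist x p.1 := dist_triangle x₀ x p.1
        have hxx : dist x₀ x = dist x x₀ := dist_comm x₀ x
        exact ⟨by linarith, by linarith⟩
      have hsub2 : cone x₀ \ cone x ⊆ D m := by
        rintro p ⟨hp1, hp2⟩
        rw [cone, mem_setOf_eq] at hp1
        rw [cone, mem_setOf_eq, not_lt] at hp2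
        have hpos : (0 : ℝ) < 1 / ((m : ℝ) + 1) := by positivity
        have htri : dist x p.1 ≤ dist x x₀ + dist x₀ p.1 := dist_triangle x x₀ p.1
        exact ⟨by linarith, by linarith⟩
      have est : ∀ u v : X, cone u \ cone v ⊆ D m →
          (∫⁻ p in cone u, h p ∂muPlus μ) ≤
            (∫⁻ p in cone v, h p ∂muPlus μ) + δ⁻¹ * ν (D m) := by
        intro u v hsub
        calc (∫⁻ p in cone u, h p ∂muPlus μ)
            ≤ ∫⁻ p in cone v ∪ (cone u \ cone v), h p ∂muPlus μ := by
              apply lintegral_mono_set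
              intro p hp
              by_cases hc : p ∈ cone v
              · exact Or.inl hc
              · exact Or.inr ⟨hp, hc⟩
          _ ≤ (∫⁻ p in cone v, h p ∂muPlus μ) + ∫⁻ p in cone u \ cone v, h p ∂muPlus μ :=
              lintegral_union_le _ _ _
          _ ≤ (∫⁻ p in cone v, h p ∂muPlus μ) + δ⁻¹ * ν (D m) := by
              exact add_le_add_right ((lintegral_mono_set hsub).trans (hDbound m)) _
      exact ⟨est x x₀ hsub1, est x₀ x hsub2⟩
    rw [ContinuousAt, ENNReal.tendsto_nhds (hGfin x₀)]
    intro ε hε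
    obtain ⟨m, hm⟩ := (htend0.eventually_lt_const hε).exists
    have hrad : (0 : ℝ) < 1 / ((m : ℝ) + 1) := by positivity
    filter_upwards [Metric.closedBall_mem_nhds x₀ hrad] with x hx
    obtain ⟨e1, e2⟩ := key m x (by simpa [Metric.mem_closedBall] using hx)
    constructor
    · refine tsub_le_iff_right.mpr (e2.trans ?_)
      exact add_le_add_right hm.le _
    · exact e1.trans (add_le_add_right hm.le _)
  exact ENNReal.continuous_rpow_const.comp hG


end WTS
end
end

section
/- Let q ∈ (0,∞), p ∈ (0,q], s ∈ ℝ, c₀ ∈ (0,∞), and c₁ ∈ (1,∞). Then there is a constant C such that for every measurable f on ℝⁿ×(0,∞), ‖f‖_{T^{p,q}_s(ℝⁿ)} ≤ C ‖f‖_{Z^{p,q}_s(ℝⁿ;c₀,c₁)}; that is, Z^{p,q}_s(ℝⁿ;c₀,c₁) embeds continuously into T^{p,q}_s(ℝⁿ). -/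
open MeasureTheory Metric Set Filter ENNReal
open scoped NNReal Topology

noncomputable section

namespace WTS

variable {X : Type*} [MetricSpace X] [MeasurableSpace X]

lemma sum_rpow_le' {ι : Type*} (s : Finset ι) (a : ι → ℝ≥0∞) {θ : ℝ} (h0 : 0 < θ) (h1 : θ ≤ 1) :
    (∑ i ∈ s, a i) ^ θ ≤ ∑ i ∈ s, a i ^ θ := by
  classical
  induction s using Finset.induction_on with
  | empty => simp [ENNReal.zero_rpow_of_pos h0]
  | insert x s hx ih =>
      rw [Finset.sum_insert hx, Finset.sum_insert hx]
      exact (ENNReal.rpow_add_le_add_rpow _ _ h0.le h1).trans (add_le_add le_rfl ih)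

lemma tsum_rpow_le' {ι : Type*} (a : ι → ℝ≥0∞) {θ : ℝ} (h0 : 0 < θ) (h1 : θ ≤ 1) :
    (∑' i, a i) ^ θ ≤ ∑' i, a i ^ θ := by
  rw [ENNReal.tsum_eq_iSup_sum]
  rw [Monotone.map_iSup_of_continuousAt (f := fun x : ℝ≥0∞ => x ^ θ)
    ENNReal.continuous_rpow_const.continuousAt
    (fun x y h => ENNReal.rpow_le_rpow h h0.le) (by simp [ENNReal.zero_rpow_of_pos h0])]
  exact iSup_le fun s => (sum_rpow_le' s a h0 h1).trans (ENNReal.sum_le_tsum s)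

set_option maxHeartbeats 2000000 in
/-- For `q ∈ (0,∞)`, `p ∈ (0,q]`, `s ∈ ℝ`:
`Z^{p,q}_s(ℝⁿ;c₀,c₁)` embeds continuously into `T^{p,q}_s(ℝⁿ)`. -/
theorem stmt15 (n : ℕ) (hn : 0 < n) (p q s c₀ c₁ : ℝ)
    (hq : 0 < q) (hp : 0 < p) (hpq : p ≤ q) (hc₀ : 0 < c₀) (hc₁ : 1 < c₁) :
    ∃ C : ℝ≥0∞, C < ∞ ∧
      ∀ f : EuclideanSpace ℝ (Fin n) × ℝ → ℂ, Measurable f →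
        tentNormS (volume : Measure (EuclideanSpace ℝ (Fin n))) p q s f ≤
          C * Znorm (volume : Measure (EuclideanSpace ℝ (Fin n))) p q s c₀ c₁ f := by
  classical
  have hc₁0 : (0:ℝ) < c₁ := lt_trans one_pos hc₁
  set σ : ℝ := Real.sqrt c₁ with hσdef
  have hσ1 : 1 < σ := by
    have h := Real.sqrt_lt_sqrt zero_le_one hc₁
    rwa [Real.sqrt_one] at h
  have hσ0 : 0 < σ := lt_trans one_pos hσ1
  have hσsq : σ * σ = c₁ := Real.mul_self_sqrt hc₁0.le
  set r : ℝ := min σ 2 with hrdef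
  have hr1 : 1 < r := lt_min hσ1 one_lt_two
  have hr0 : 0 < r := lt_trans one_pos hr1
  have hrσ : r ≤ σ := min_le_left _ _
  have hr2 : r ≤ 2 := min_le_right _ _
  have hrk0 : ∀ k : ℤ, (0:ℝ) < r ^ k := fun k => zpow_pos hr0 k
  set δ : ℝ := c₀ / (2 * σ) with hδdef
  have hδ0 : 0 < δ := div_pos hc₀ (by positivity)
  have h2δ : 2 * δ = c₀ / σ := by rw [hδdef]; field_simp
  haveI : Nontrivial (EuclideanSpace ℝ (Fin n)) :=
    Module.nontrivial_of_finrank_pos (R := ℝ) (by simpa [finrank_euclideanSpace_fin] using hn)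
  set vb : ℝ≥0∞ := volume (ball (0 : EuclideanSpace ℝ (Fin n)) 1) with hvbdef
  have hvb0 : 0 < vb := measure_ball_pos _ _ one_pos
  have hvbt : vb < ∞ := measure_ball_lt_top
  have hvol : ∀ (x : EuclideanSpace ℝ (Fin n)) (t : ℝ), 0 ≤ t →
      volume (ball x t) = ENNReal.ofReal (t ^ n) * vb := by
    intro x t ht
    rw [Measure.addHaar_ball volume x ht, finrank_euclideanSpace_fin]

  have hvolp : ∀ pp : EuclideanSpace ℝ (Fin n) × ℝ, vol (volume) pp.1 pp.2
      = if 0 < pp.2 then ENNReal.ofReal (pp.2 ^ n) * vb else 0 := by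
    intro pp
    by_cases h : 0 < pp.2
    · rw [if_pos h, vol, hvol _ _ h.le]
    · rw [if_neg h, vol, ball_eq_empty.2 (not_lt.1 h), measure_empty]
  have hvolm : Measurable fun pp : EuclideanSpace ℝ (Fin n) × ℝ => vol (volume) pp.1 pp.2 := by
    simp_rw [hvolp]
    exact Measurable.ite (measurable_snd measurableSet_Ioi)
      ((measurable_snd.pow_const n).ennreal_ofReal.mul_const vb) measurable_const

  haveI hsfT : SFinite tMeasure := by unfold tMeasure; infer_instance
  haveI hsfP : SFinite (muPlus (volume : Measure (EuclideanSpace ℝ (Fin n)))) := by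
    unfold muPlus; infer_instance
  -- finite net of the ball of radius 2
  obtain ⟨S, hS⟩ := (isCompact_closedBall (0 : EuclideanSpace ℝ (Fin n)) 2).elim_finite_subcover
    (fun u : EuclideanSpace ℝ (Fin n) => ball u δ) (fun u => isOpen_ball)
    (fun x _ => mem_iUnion.2 ⟨x, mem_ball_self hδ0⟩)
  obtain ⟨L, hL⟩ : ∃ L : ℕ, σ < r ^ L := pow_unbounded_of_one_lt σ hr1
  set J : ℤ → Set ℝ := fun k => Ioo (r ^ k / σ) (r ^ k * σ) with hJdef
  have htM : ∀ a b : ℝ, 0 < a → a ≤ b →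
      (ENNReal.ofReal (b⁻¹ * (b - a)) ≤ tMeasure (Ioo a b) ∧
       tMeasure (Ioo a b) ≤ ENNReal.ofReal (a⁻¹ * (b - a))) := by
    intro a b ha hab
    have hb : 0 < b := lt_of_lt_of_le ha hab
    have hIoo : Ioo a b ∩ Ioi (0:ℝ) = Ioo a b :=
      inter_eq_self_of_subset_left (fun t ht => lt_trans ha ht.1)
    have heq : tMeasure (Ioo a b) = ∫⁻ t in Ioo a b, ENNReal.ofReal t⁻¹ ∂volume := by
      rw [tMeasure, withDensity_apply _ measurableSet_Ioo,
        Measure.restrict_restrict measurableSet_Ioo, hIoo]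
    constructor
    · rw [heq]
      calc ENNReal.ofReal (b⁻¹ * (b-a))
          = ∫⁻ _ in Ioo a b, ENNReal.ofReal b⁻¹ ∂volume := by
            rw [setLIntegral_const, Real.volume_Ioo, ← ENNReal.ofReal_mul (by positivity)]
        _ ≤ ∫⁻ t in Ioo a b, ENNReal.ofReal t⁻¹ ∂volume := by
            refine setLIntegral_mono (measurable_inv.ennreal_ofReal) fun t ht => ?_
            exact ENNReal.ofReal_le_ofReal (inv_anti₀ (lt_trans ha ht.1) ht.2.le)
    · rw [heq]
      calc ∫⁻ t in Ioo a b, ENNReal.ofReal t⁻¹ ∂volume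
          ≤ ∫⁻ _ in Ioo a b, ENNReal.ofReal a⁻¹ ∂volume := by
            refine setLIntegral_mono measurable_const fun t ht => ?_
            exact ENNReal.ofReal_le_ofReal (inv_anti₀ ha ht.1.le)
        _ = ENNReal.ofReal (a⁻¹ * (b - a)) := by
            rw [setLIntegral_const, Real.volume_Ioo, ← ENNReal.ofReal_mul (by positivity)]
  set CA : ℝ≥0∞ := ENNReal.ofReal (c₀ ^ n * c₁ ^ n * c₁ ^ 2) with hCAdef
  set Ct : ℝ≥0∞ := (ENNReal.ofReal (1 - c₁⁻¹))⁻¹ with hCtdef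
  have hc₁inv : (0:ℝ) < 1 - c₁⁻¹ := by
    rw [sub_pos]
    exact inv_lt_one_of_one_lt₀ hc₁
  have hCt_top : Ct < ∞ := ENNReal.inv_lt_top.2 (ENNReal.ofReal_pos.2 hc₁inv)
  set K : ℕ := 2 * L + 1 with hKdef
  set Cfin : ℝ≥0∞ := CA ^ (p/q) * Ct * (S.card : ℝ≥0∞) * (K : ℝ≥0∞) with hCfindef
  have hCfin_top : Cfin < ∞ := by
    refine ENNReal.mul_lt_top (ENNReal.mul_lt_top (ENNReal.mul_lt_top ?_ hCt_top) ?_) ?_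
    · exact ENNReal.rpow_lt_top_of_nonneg (by positivity) ENNReal.ofReal_ne_top
    · exact ENNReal.natCast_lt_top _
    · exact ENNReal.natCast_lt_top _
  refine ⟨Cfin ^ (1/p), ENNReal.rpow_lt_top_of_nonneg (by positivity) hCfin_top.ne, fun f hf => ?_⟩

  set nt : Measure (EuclideanSpace ℝ (Fin n) × ℝ) :=
    (volume : Measure (EuclideanSpace ℝ (Fin n))).prod (volume : Measure ℝ) with hntdef
  set g : EuclideanSpace ℝ (Fin n) × ℝ → ℂ := Vpow (volume) (-s) f with hgdef
  have hgm : Measurable g := by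
    rw [hgdef]
    unfold Vpow
    exact (Complex.measurable_ofReal.comp (hvolm.ennreal_toReal.pow_const (-s))).mul hf
  set G : EuclideanSpace ℝ (Fin n) × ℝ → ℝ≥0∞ := fun pp => (‖g pp‖₊ : ℝ≥0∞) ^ q with hGdef
  have hGm : Measurable G :=
    ENNReal.continuous_rpow_const.measurable.comp hgm.nnnorm.coe_nnreal_ennreal
  set Fn : EuclideanSpace ℝ (Fin n) × ℝ → ℝ≥0∞ :=
    fun pp => G pp / vol (volume) pp.1 pp.2 with hFndef
  have hFnm : Measurable Fn := hGm.div hvolm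
  set W : EuclideanSpace ℝ (Fin n) × ℝ → ℝ≥0∞ :=
    fun w => Wavg (volume) c₀ c₁ q g w.1 w.2 with hWdef
  have hwhit_meas : ∀ (x : EuclideanSpace ℝ (Fin n)) (t : ℝ),
      MeasurableSet (whitney c₀ c₁ x t) := fun x t => measurableSet_ball.prod measurableSet_Ioo
  have hWsetm : MeasurableSet {z : (EuclideanSpace ℝ (Fin n) × ℝ) × (EuclideanSpace ℝ (Fin n) × ℝ) |
      z.2 ∈ whitney c₀ c₁ z.1.1 z.1.2} := by
    have m1 : MeasurableSet {z : (EuclideanSpace ℝ (Fin n) × ℝ) × (EuclideanSpace ℝ (Fin n) × ℝ) |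
        dist z.2.1 z.1.1 < c₀ * z.1.2} :=
      measurableSet_lt (measurable_snd.fst.dist measurable_fst.fst)
        (measurable_fst.snd.const_mul c₀)
    have m2 : MeasurableSet {z : (EuclideanSpace ℝ (Fin n) × ℝ) × (EuclideanSpace ℝ (Fin n) × ℝ) |
        z.1.2 / c₁ < z.2.2} :=
      measurableSet_lt (measurable_fst.snd.div_const c₁) measurable_snd.snd
    have m3 : MeasurableSet {z : (EuclideanSpace ℝ (Fin n) × ℝ) × (EuclideanSpace ℝ (Fin n) × ℝ) |
        z.2.2 < c₁ * z.1.2} :=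
      measurableSet_lt measurable_snd.snd (measurable_fst.snd.const_mul c₁)
    have : {z : (EuclideanSpace ℝ (Fin n) × ℝ) × (EuclideanSpace ℝ (Fin n) × ℝ) |
        z.2 ∈ whitney c₀ c₁ z.1.1 z.1.2}
        = {z | dist z.2.1 z.1.1 < c₀ * z.1.2} ∩ ({z | z.1.2 / c₁ < z.2.2} ∩ {z | z.2.2 < c₁ * z.1.2}) := by
      ext z
      simp only [whitney, mem_setOf_eq, mem_prod, mem_ball, mem_Ioo, mem_inter_iff]
    rw [this]
    exact m1.inter (m2.inter m3)
  have hnum_eq : ∀ w : EuclideanSpace ℝ (Fin n) × ℝ,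
      ∫⁻ pp in whitney c₀ c₁ w.1 w.2, G pp ∂nt
      = ∫⁻ pp, ({z : (EuclideanSpace ℝ (Fin n) × ℝ) × (EuclideanSpace ℝ (Fin n) × ℝ) |
          z.2 ∈ whitney c₀ c₁ z.1.1 z.1.2}.indicator (fun z => G z.2)) (w, pp) ∂nt := by
    intro w
    rw [← lintegral_indicator (hwhit_meas w.1 w.2)]
    congr 1
  have hnumm : Measurable fun w : EuclideanSpace ℝ (Fin n) × ℝ =>
      ∫⁻ pp in whitney c₀ c₁ w.1 w.2, G pp ∂nt := by
    simp_rw [hnum_eq]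
    exact Measurable.lintegral_prod_right' ((hGm.comp measurable_snd).indicator hWsetm)
  have hMw_eq : ∀ w : EuclideanSpace ℝ (Fin n) × ℝ, 0 < w.2 →
      nt (whitney c₀ c₁ w.1 w.2)
      = ENNReal.ofReal ((c₀ * w.2) ^ n) * vb * ENNReal.ofReal (c₁ * w.2 - w.2 / c₁) := by
    intro w hw
    rw [hntdef, whitney, Measure.prod_prod, Real.volume_Ioo, hvol _ _ (by positivity)]
  have hMwm : Measurable fun w : EuclideanSpace ℝ (Fin n) × ℝ => nt (whitney c₀ c₁ w.1 w.2) := by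
    have : (fun w : EuclideanSpace ℝ (Fin n) × ℝ => nt (whitney c₀ c₁ w.1 w.2))
        = fun w => if 0 < w.2 then ENNReal.ofReal ((c₀ * w.2) ^ n) * vb * ENNReal.ofReal (c₁ * w.2 - w.2 / c₁) else 0 := by
      funext w
      by_cases h : 0 < w.2
      · rw [if_pos h, hMw_eq w h]
      · rw [if_neg h, hntdef, whitney, Measure.prod_prod,
          ball_eq_empty.2 (by nlinarith [not_lt.1 h] : c₀ * w.2 ≤ 0), measure_empty, zero_mul]
    rw [this]
    refine Measurable.ite (measurable_snd measurableSet_Ioi) ?_ measurable_const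
    exact ((((measurable_snd.const_mul c₀).pow_const n).ennreal_ofReal.mul_const vb).mul
      ((measurable_snd.const_mul c₁).sub (measurable_snd.div_const c₁)).ennreal_ofReal)
  have hWm : Measurable W := by
    rw [hWdef]
    unfold Wavg
    exact ENNReal.continuous_rpow_const.measurable.comp (hMwm.inv.mul hnumm)

  -- reduction to the main integral estimate
  suffices hmain : (∫⁻ x, Aq (volume) q g x ^ p ∂(volume : Measure (EuclideanSpace ℝ (Fin n))))
      ≤ Cfin * ∫⁻ w, W w ^ p ∂(muPlus (volume)) by
    have h1 : tentNormS (volume : Measure (EuclideanSpace ℝ (Fin n))) p q s f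
        = (∫⁻ x, Aq (volume) q g x ^ p ∂(volume : Measure (EuclideanSpace ℝ (Fin n)))) ^ (1/p) := rfl
    have h2 : Znorm (volume : Measure (EuclideanSpace ℝ (Fin n))) p q s c₀ c₁ f
        = (∫⁻ w, W w ^ p ∂(muPlus (volume))) ^ (1/p) := rfl
    rw [h1, h2]
    calc (∫⁻ x, Aq (volume) q g x ^ p ∂(volume : Measure (EuclideanSpace ℝ (Fin n)))) ^ (1/p)
        ≤ (Cfin * ∫⁻ w, W w ^ p ∂(muPlus (volume))) ^ (1/p) :=
          ENNReal.rpow_le_rpow hmain (by positivity)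
      _ = Cfin ^ (1/p) * (∫⁻ w, W w ^ p ∂(muPlus (volume))) ^ (1/p) :=
          ENNReal.mul_rpow_of_nonneg _ _ (by positivity)
  set Qs : ℤ → EuclideanSpace ℝ (Fin n) → EuclideanSpace ℝ (Fin n) →
      Set (EuclideanSpace ℝ (Fin n) × ℝ) :=
    fun k u x => ball (x + (r ^ k) • u) (δ * r ^ k) ×ˢ J k with hQsdef
  have hQs_meas : ∀ (k : ℤ) u x, MeasurableSet (Qs k u x) :=
    fun k u x => measurableSet_ball.prod measurableSet_Ioo
  set I : ℤ → EuclideanSpace ℝ (Fin n) → EuclideanSpace ℝ (Fin n) → ℝ≥0∞ :=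
    fun k u x => ∫⁻ pp in Qs k u x, Fn pp ∂(muPlus (volume)) with hIdef
  have hθ0 : 0 < p / q := div_pos hp hq
  have hθ1 : p / q ≤ 1 := by rw [div_le_one hq]; exact hpq
  have hQzm : ∀ (k : ℤ) (u : EuclideanSpace ℝ (Fin n)),
      MeasurableSet {z : EuclideanSpace ℝ (Fin n) × (EuclideanSpace ℝ (Fin n) × ℝ) |
        z.2 ∈ Qs k u z.1} := by
    intro k u
    have : {z : EuclideanSpace ℝ (Fin n) × (EuclideanSpace ℝ (Fin n) × ℝ) | z.2 ∈ Qs k u z.1}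
        = {z : EuclideanSpace ℝ (Fin n) × (EuclideanSpace ℝ (Fin n) × ℝ) |
            dist z.2.1 (z.1 + (r ^ k) • u) < δ * r ^ k} ∩ {z | z.2.2 ∈ J k} := by
      ext z
      simp only [hQsdef, mem_setOf_eq, mem_prod, mem_ball, mem_inter_iff]
    rw [this]
    exact (measurableSet_lt (measurable_snd.fst.dist (measurable_fst.add_const _))
      measurable_const).inter (measurable_snd.snd measurableSet_Ioo)
  have hbox : ∀ (h : EuclideanSpace ℝ (Fin n) × ℝ → ℝ≥0∞), Measurable h → ∀ (k : ℤ)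
      (u : EuclideanSpace ℝ (Fin n)),
      Measurable fun x => ∫⁻ pp in Qs k u x, h pp ∂(muPlus (volume)) := by
    intro h hm k u
    have key : ∀ x, (∫⁻ pp in Qs k u x, h pp ∂(muPlus (volume)))
        = ∫⁻ pp, ({z : EuclideanSpace ℝ (Fin n) × (EuclideanSpace ℝ (Fin n) × ℝ) |
        z.2 ∈ Qs k u z.1}.indicator (fun z => h z.2)) (x, pp) ∂(muPlus (volume)) := by
      intro x
      rw [← lintegral_indicator (hQs_meas k u x)]
      congr 1
    simp_rw [key]
    exact Measurable.lintegral_prod_right' ((hm.comp measurable_snd).indicator (hQzm k u))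
  have hIm : ∀ (k : ℤ) (u : EuclideanSpace ℝ (Fin n)), Measurable fun x => I k u x :=
    fun k u => hbox Fn hFnm k u
  have hdens : ∀ (k : ℤ) (u x : EuclideanSpace ℝ (Fin n)),
      ∫⁻ pp in Qs k u x, G pp ∂(muPlus (volume))
        ≤ ENNReal.ofReal (r ^ k / σ)⁻¹ * ∫⁻ pp in Qs k u x, G pp ∂nt := by
    intro k u x
    have hQm := hQs_meas k u x
    have hind : Measurable ((Qs k u x).indicator G) := hGm.indicator hQm
    have hinm : Measurable fun x' => ∫⁻ t, (Qs k u x).indicator G (x', t) ∂(volume : Measure ℝ) :=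
      hind.lintegral_prod_right'
    rw [← lintegral_indicator hQm, ← lintegral_indicator hQm]
    rw [show muPlus (volume : Measure (EuclideanSpace ℝ (Fin n)))
      = (volume : Measure (EuclideanSpace ℝ (Fin n))).prod tMeasure from rfl]
    rw [lintegral_prod _ hind.aemeasurable]
    rw [show nt = (volume : Measure (EuclideanSpace ℝ (Fin n))).prod (volume : Measure ℝ) from rfl]
    rw [lintegral_prod _ hind.aemeasurable]
    rw [← lintegral_const_mul _ hinm]
    refine lintegral_mono fun x' => ?_
    have hm' : Measurable fun t => (Qs k u x).indicator G (x', t) :=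
      hind.comp measurable_prodMk_left
    rw [tMeasure, lintegral_withDensity_eq_lintegral_mul _ measurable_inv.ennreal_ofReal hm']
    calc ∫⁻ t, ((fun t => ENNReal.ofReal t⁻¹) * fun t => (Qs k u x).indicator G (x', t)) t
          ∂((volume : Measure ℝ).restrict (Ioi 0))
        ≤ ∫⁻ t, ENNReal.ofReal (r ^ k / σ)⁻¹ * (Qs k u x).indicator G (x', t)
          ∂((volume : Measure ℝ).restrict (Ioi 0)) := by
          refine setLIntegral_mono (measurable_const.mul hm') fun t ht => ?_
          simp only [Pi.mul_apply]
          by_cases hQ' : (x', t) ∈ Qs k u x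
          · refine mul_le_mul_left (ENNReal.ofReal_le_ofReal ?_) _
            have htJ : t ∈ J k := hQ'.2
            have h1 : r ^ k / σ < t := htJ.1
            exact inv_anti₀ (div_pos (hrk0 k) hσ0) h1.le
          · rw [indicator_of_notMem hQ', mul_zero, mul_zero]
      _ ≤ ∫⁻ t, ENNReal.ofReal (r ^ k / σ)⁻¹ * (Qs k u x).indicator G (x', t)
            ∂(volume : Measure ℝ) := setLIntegral_le_lintegral _ _
      _ = ENNReal.ofReal (r ^ k / σ)⁻¹ * ∫⁻ t, (Qs k u x).indicator G (x', t)
            ∂(volume : Measure ℝ) := lintegral_const_mul _ hm'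
  have hdist : ∀ (k : ℤ) (u x w1 : EuclideanSpace ℝ (Fin n)),
      dist w1 (x + (r ^ k) • u) = dist x (w1 - (r ^ k) • u) := by
    intro k u x w1
    rw [dist_eq_norm, dist_eq_norm, ← norm_neg (x - (w1 - (r ^ k) • u))]
    congr 1
    abel
  have hImθ : ∀ (k : ℤ) (u : EuclideanSpace ℝ (Fin n)), Measurable fun x => I k u x ^ (p/q) :=
    fun k u => ENNReal.continuous_rpow_const.measurable.comp (hIm k u)
  have hWpm : Measurable fun w : EuclideanSpace ℝ (Fin n) × ℝ => W w ^ p :=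
    ENNReal.continuous_rpow_const.measurable.comp hWm
  have hindm : ∀ k : ℤ, Measurable fun w : EuclideanSpace ℝ (Fin n) × ℝ =>
      (J k).indicator (fun _ => (1:ℝ≥0∞)) w.2 * W w ^ p :=
    fun k => ((measurable_const.indicator measurableSet_Ioo).comp measurable_snd).mul hWpm
  have hAqp : ∀ x, Aq (volume) q g x ^ p ≤ ∑' k : ℤ, ∑ u ∈ S, I k u x ^ (p/q) := by
    intro x
    have hcov : ∀ pp : EuclideanSpace ℝ (Fin n) × ℝ, pp ∈ cone x →
        ∃ k : ℤ, ∃ u ∈ S, pp ∈ Qs k u x := by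
      intro pp hpp
      have hd : dist x pp.1 < pp.2 := hpp
      have ht : 0 < pp.2 := lt_of_le_of_lt dist_nonneg hd
      obtain ⟨k, hk⟩ := exists_mem_Ico_zpow ht hr1
      have hrk := hrk0 k
      have hnv : ‖pp.1 - x‖ < 2 * r ^ k := by
        calc ‖pp.1 - x‖ = dist x pp.1 := by rw [dist_comm, dist_eq_norm]
          _ < pp.2 := hd
          _ < r ^ (k+1) := hk.2
          _ = r * r ^ k := by rw [zpow_add₀ hr0.ne', zpow_one]; ring
          _ ≤ 2 * r ^ k := by nlinarith
      have hv2 : (r ^ k)⁻¹ • (pp.1 - x) ∈ closedBall (0 : EuclideanSpace ℝ (Fin n)) 2 := by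
        rw [mem_closedBall, dist_zero_right, norm_smul, norm_inv, Real.norm_eq_abs,
          abs_of_pos hrk]
        rw [inv_mul_le_iff₀ hrk]
        nlinarith
      obtain ⟨u, hu, hmemu⟩ := mem_iUnion₂.1 (hS hv2)
      refine ⟨k, u, hu, ?_, ?_⟩
      · -- spatial membership
        show pp.1 ∈ ball (x + (r ^ k) • u) (δ * r ^ k)
        rw [mem_ball, dist_eq_norm]
        have heq : pp.1 - (x + (r ^ k) • u) = (r ^ k) • ((r ^ k)⁻¹ • (pp.1 - x) - u) := by
          rw [smul_sub, smul_inv_smul₀ hrk.ne']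
          abel
        rw [heq, norm_smul, Real.norm_eq_abs, abs_of_pos hrk]
        have : ‖(r ^ k)⁻¹ • (pp.1 - x) - u‖ < δ := by
          have := mem_ball.1 hmemu
          rwa [dist_eq_norm] at this
        calc r ^ k * ‖(r ^ k)⁻¹ • (pp.1 - x) - u‖ < r ^ k * δ := by
              exact (mul_lt_mul_iff_right₀ hrk).2 this
          _ = δ * r ^ k := by ring
      · -- time membership
        show pp.2 ∈ Ioo (r ^ k / σ) (r ^ k * σ)
        constructor
        · exact lt_of_lt_of_le (div_lt_self hrk hσ1) hk.1
        · calc pp.2 < r ^ (k+1) := hk.2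
            _ = r * r ^ k := by rw [zpow_add₀ hr0.ne', zpow_one]; ring
            _ ≤ σ * r ^ k := by nlinarith
            _ = r ^ k * σ := by ring
    have hconem : MeasurableSet (cone x) :=
      measurableSet_lt (measurable_const.dist measurable_fst) measurable_snd
    have hind : ∀ pp, (cone x).indicator Fn pp ≤
        ∑' k : ℤ, ∑ u ∈ S, (Qs k u x).indicator Fn pp := by
      intro pp
      by_cases hpp : pp ∈ cone x
      · rw [indicator_of_mem hpp]
        obtain ⟨k, u, hu, hmem⟩ := hcov pp hpp
        calc Fn pp = (Qs k u x).indicator Fn pp := (indicator_of_mem hmem _).symm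
          _ ≤ ∑ u' ∈ S, (Qs k u' x).indicator Fn pp :=
            Finset.single_le_sum (f := fun u' => (Qs k u' x).indicator Fn pp)
              (fun _ _ => zero_le) hu
          _ ≤ ∑' k : ℤ, ∑ u' ∈ S, (Qs k u' x).indicator Fn pp :=
            ENNReal.le_tsum k
      · rw [indicator_of_notMem hpp]
        exact zero_le
    have hE : (∫⁻ pp in cone x, Fn pp ∂(muPlus (volume))) ≤ ∑' k : ℤ, ∑ u ∈ S, I k u x := by
      rw [← lintegral_indicator hconem]
      calc ∫⁻ pp, (cone x).indicator Fn pp ∂(muPlus (volume))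
          ≤ ∫⁻ pp, ∑' k : ℤ, ∑ u ∈ S, (Qs k u x).indicator Fn pp ∂(muPlus (volume)) :=
            lintegral_mono hind
        _ = ∑' k : ℤ, ∫⁻ pp, ∑ u ∈ S, (Qs k u x).indicator Fn pp ∂(muPlus (volume)) :=
            lintegral_tsum (fun k => (Finset.measurable_sum S
              (fun u _ => hFnm.indicator (hQs_meas k u x))).aemeasurable)
        _ = ∑' k : ℤ, ∑ u ∈ S, ∫⁻ pp, (Qs k u x).indicator Fn pp ∂(muPlus (volume)) := by
            congr 1
            funext k
            exact lintegral_finset_sum S (fun u _ => hFnm.indicator (hQs_meas k u x))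
        _ = ∑' k : ℤ, ∑ u ∈ S, I k u x := by
            congr 1
            funext k
            refine Finset.sum_congr rfl fun u _ => ?_
            rw [lintegral_indicator (hQs_meas k u x)]
    have h1 : Aq (volume) q g x ^ p
        = (∫⁻ pp in cone x, Fn pp ∂(muPlus (volume))) ^ (p/q) := by
      have hEq : Aq (volume) q g x
          = (∫⁻ pp in cone x, Fn pp ∂(muPlus (volume))) ^ (1/q) := rfl
      rw [hEq, ← ENNReal.rpow_mul, one_div, inv_mul_eq_div]
    rw [h1]
    calc (∫⁻ pp in cone x, Fn pp ∂(muPlus (volume))) ^ (p/q)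
        ≤ (∑' k : ℤ, ∑ u ∈ S, I k u x) ^ (p/q) := ENNReal.rpow_le_rpow hE hθ0.le
      _ ≤ ∑' k : ℤ, (∑ u ∈ S, I k u x) ^ (p/q) := tsum_rpow_le' _ hθ0 hθ1
      _ ≤ ∑' k : ℤ, ∑ u ∈ S, I k u x ^ (p/q) :=
          ENNReal.tsum_le_tsum (fun k => sum_rpow_le' S _ hθ0 hθ1)
  have hC : ∀ (k : ℤ) (u : EuclideanSpace ℝ (Fin n)), u ∈ S → (∫⁻ x, I k u x ^ (p/q) ∂volume)
      ≤ CA ^ (p/q) * Ct *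
        ∫⁻ w, (J k).indicator (fun _ => (1:ℝ≥0∞)) w.2 * W w ^ p ∂(muPlus (volume)) := by
    intro k u _
    have hrk := hrk0 k
    have hrkne : (r : ℝ) ^ k ≠ 0 := hrk.ne'
    have hσne : σ ≠ 0 := hσ0.ne'
    set A : ℝ := r ^ k / σ with hAdef
    set B : ℝ := r ^ k * σ with hBdef
    have hA0 : 0 < A := div_pos hrk hσ0
    have hB0 : 0 < B := mul_pos hrk hσ0
    have hAB : A ≤ B := by
      rw [hAdef, hBdef, div_le_iff₀ hσ0]
      nlinarith
    have hJk : J k = Ioo A B := rfl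
    set ρ : ℝ := δ * r ^ k with hρdef
    have hρ0 : 0 < ρ := mul_pos hδ0 hrk
    set tJ : ℝ≥0∞ := tMeasure (J k) with htJdef
    have htJl : ENNReal.ofReal (1 - c₁⁻¹) ≤ tJ := by
      have h := (htM A B hA0 hAB).1
      rw [htJdef, hJk]
      refine le_trans (le_of_eq ?_) h
      congr 1
      rw [hAdef, hBdef, ← hσsq]
      field_simp
    have htJu : tJ ≤ ENNReal.ofReal (c₁ - 1) := by
      have h := (htM A B hA0 hAB).2
      rw [htJdef, hJk]
      refine le_trans h (le_of_eq ?_)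
      congr 1
      rw [hAdef, hBdef, ← hσsq]
      field_simp
    have htJ0 : tJ ≠ 0 := (lt_of_lt_of_le (ENNReal.ofReal_pos.2 hc₁inv) htJl).ne'
    have htJt : tJ ≠ ∞ := (lt_of_le_of_lt htJu ENNReal.ofReal_lt_top).ne
    set mA : ℝ≥0∞ := ENNReal.ofReal (ρ ^ n) * vb with hmAdef
    have hmA0 : mA ≠ 0 := mul_ne_zero (ENNReal.ofReal_pos.2 (by positivity)).ne' hvb0.ne'
    have hmAt : mA ≠ ∞ := ENNReal.mul_ne_top ENNReal.ofReal_ne_top hvbt.ne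
    have hmQ : ∀ x : EuclideanSpace ℝ (Fin n), muPlus (volume) (Qs k u x) = mA * tJ := by
      intro x
      show ((volume : Measure (EuclideanSpace ℝ (Fin n))).prod tMeasure)
        (ball (x + (r ^ k) • u) ρ ×ˢ J k) = mA * tJ
      rw [Measure.prod_prod, hvol _ _ hρ0.le]
    have hQsub : ∀ (x : EuclideanSpace ℝ (Fin n)) (w : EuclideanSpace ℝ (Fin n) × ℝ),
        w ∈ Qs k u x → Qs k u x ⊆ whitney c₀ c₁ w.1 w.2 := by
      intro x w hw pp hpp
      obtain ⟨hw1, hw2⟩ := hw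
      obtain ⟨hp1, hp2⟩ := hpp
      have hwA : A < w.2 := hw2.1
      have hwB : w.2 < B := hw2.2
      have hpA : A < pp.2 := hp2.1
      have hpB : pp.2 < B := hp2.2
      have hBA : B = A * c₁ := by
        rw [hAdef, hBdef, ← hσsq]
        field_simp
      constructor
      · show pp.1 ∈ ball w.1 (c₀ * w.2)
        rw [mem_ball]
        have hd1 : dist pp.1 (x + (r ^ k) • u) < ρ := mem_ball.1 hp1
        have hd2 : dist w.1 (x + (r ^ k) • u) < ρ := mem_ball.1 hw1
        have h2ρ : 2 * ρ = c₀ * A := by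
          rw [hρdef, hAdef]
          rw [show 2 * (δ * r ^ k) = (2 * δ) * r ^ k by ring, h2δ]
          field_simp
        calc dist pp.1 w.1 ≤ dist pp.1 (x + (r ^ k) • u) + dist w.1 (x + (r ^ k) • u) :=
              dist_triangle_right _ _ _
          _ < ρ + ρ := add_lt_add hd1 hd2
          _ = c₀ * A := by rw [← h2ρ]; ring
          _ ≤ c₀ * w.2 := by nlinarith
      · show pp.2 ∈ Ioo (w.2 / c₁) (c₁ * w.2)
        constructor
        · have h1 : w.2 / c₁ < A := by
            rw [div_lt_iff₀ hc₁0]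
            calc w.2 < B := hwB
              _ = A * c₁ := hBA
          exact lt_trans h1 hpA
        · have h1 : B < c₁ * w.2 := by
            calc B = A * c₁ := hBA
              _ < w.2 * c₁ := by nlinarith
              _ = c₁ * w.2 := mul_comm _ _
          exact lt_trans hpB h1
    have hWq : ∀ w : EuclideanSpace ℝ (Fin n) × ℝ, W w ^ q
        = (nt (whitney c₀ c₁ w.1 w.2))⁻¹ * ∫⁻ pp in whitney c₀ c₁ w.1 w.2, G pp ∂nt := by
      intro w
      show (Wavg (volume) c₀ c₁ q g w.1 w.2) ^ q = _
      unfold Wavg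
      rw [← ENNReal.rpow_mul, one_div, inv_mul_cancel₀ hq.ne', ENNReal.rpow_one]
    have hIbound : ∀ (x : EuclideanSpace ℝ (Fin n)) (w : EuclideanSpace ℝ (Fin n) × ℝ),
        w ∈ Qs k u x → I k u x ≤ CA * W w ^ q := by
      intro x w hw
      have hwA : A < w.2 := hw.2.1
      have hwB : w.2 < B := hw.2.2
      have hw20 : 0 < w.2 := lt_trans hA0 hwA
      set Mw : ℝ≥0∞ := nt (whitney c₀ c₁ w.1 w.2) with hMwdef
      have hMweq : Mw = ENNReal.ofReal ((c₀ * w.2) ^ n) * vb *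
          ENNReal.ofReal (c₁ * w.2 - w.2 / c₁) := hMw_eq w hw20
      have hMw0 : Mw ≠ 0 := by
        rw [hMweq]
        refine mul_ne_zero (mul_ne_zero (ENNReal.ofReal_pos.2 (by positivity)).ne' hvb0.ne') ?_
        refine (ENNReal.ofReal_pos.2 ?_).ne'
        have h1 : w.2 / c₁ < w.2 := div_lt_self hw20 hc₁
        nlinarith
      have hMwt : Mw ≠ ∞ := by
        rw [hMweq]
        exact ENNReal.mul_ne_top (ENNReal.mul_ne_top ENNReal.ofReal_ne_top hvbt.ne)
          ENNReal.ofReal_ne_top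
      have hMwup : Mw ≤ ENNReal.ofReal ((c₀ * B) ^ n) * vb * ENNReal.ofReal (c₁ * B) := by
        rw [hMweq]
        refine mul_le_mul' (mul_le_mul' (ENNReal.ofReal_le_ofReal ?_) le_rfl)
          (ENNReal.ofReal_le_ofReal ?_)
        · refine pow_le_pow_left₀ (by positivity) ?_ n
          nlinarith
        · have h2 : 0 ≤ w.2 / c₁ := by positivity
          nlinarith
      set vlow : ℝ≥0∞ := ENNReal.ofReal (A ^ n) * vb with hvlowdef
      calc I k u x
          ≤ ∫⁻ pp in Qs k u x, G pp / vlow ∂(muPlus (volume)) := by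
            refine setLIntegral_mono (hGm.div measurable_const) fun pp hpp => ?_
            show G pp / vol (volume) pp.1 pp.2 ≤ _
            have hppA : A < pp.2 := hpp.2.1
            have hvolpp : vol (volume) pp.1 pp.2 = ENNReal.ofReal (pp.2 ^ n) * vb := by
              rw [hvolp pp, if_pos (lt_trans hA0 hppA)]
            refine ENNReal.div_le_div_left ?_ _
            rw [hvolpp, hvlowdef]
            exact mul_le_mul_left
              (ENNReal.ofReal_le_ofReal (pow_le_pow_left₀ hA0.le hppA.le n)) vb
        _ = vlow⁻¹ * ∫⁻ pp in Qs k u x, G pp ∂(muPlus (volume)) := by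
            simp_rw [div_eq_mul_inv]
            rw [lintegral_mul_const _ hGm, mul_comm]
        _ ≤ vlow⁻¹ * (ENNReal.ofReal A⁻¹ * ∫⁻ pp in Qs k u x, G pp ∂nt) :=
            mul_le_mul_right (hdens k u x) _
        _ ≤ vlow⁻¹ * (ENNReal.ofReal A⁻¹ * (Mw * W w ^ q)) := by
            refine mul_le_mul_right (mul_le_mul_right ?_ _) _
            have hTle : (∫⁻ pp in Qs k u x, G pp ∂nt)
                ≤ ∫⁻ pp in whitney c₀ c₁ w.1 w.2, G pp ∂nt :=
              lintegral_mono_set (hQsub x w hw)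
            refine hTle.trans (le_of_eq ?_)
            rw [hWq w, ← mul_assoc, ENNReal.mul_inv_cancel hMw0 hMwt, one_mul]
        _ ≤ vlow⁻¹ * (ENNReal.ofReal A⁻¹ *
              ((ENNReal.ofReal ((c₀ * B) ^ n) * vb * ENNReal.ofReal (c₁ * B)) * W w ^ q)) :=
            mul_le_mul_right (mul_le_mul_right (mul_le_mul_left hMwup _) _) _
        _ = (vlow⁻¹ * vb * (ENNReal.ofReal A⁻¹ * ENNReal.ofReal ((c₀ * B) ^ n) *
              ENNReal.ofReal (c₁ * B))) * W w ^ q := by ring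
        _ = CA * W w ^ q := by
            congr 1
            rw [hvlowdef, ENNReal.mul_inv (Or.inl (ENNReal.ofReal_pos.2 (by positivity)).ne')
              (Or.inl ENNReal.ofReal_ne_top)]
            rw [← ENNReal.ofReal_inv_of_pos (by positivity : (0:ℝ) < A ^ n)]
            rw [mul_assoc (ENNReal.ofReal (A ^ n)⁻¹) vb⁻¹ vb,
              ENNReal.inv_mul_cancel hvb0.ne' hvbt.ne, mul_one]
            rw [← ENNReal.ofReal_mul (by positivity), ← ENNReal.ofReal_mul (by positivity),
              ← ENNReal.ofReal_mul (by positivity)]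
            rw [hCAdef]
            congr 1
            rw [hAdef, hBdef, ← hσsq]
            field_simp
            rw [← mul_pow, ← mul_pow]
            congr 1
            rw [div_mul_eq_mul_div, div_mul_eq_mul_div, eq_div_iff hσne]
            ring
    have hqθ : q * (p / q) = p := by field_simp
    have hmq0 : mA * tJ ≠ 0 := mul_ne_zero hmA0 htJ0
    have hmqt : mA * tJ ≠ ∞ := ENNReal.mul_ne_top hmAt htJt
    have hIθ : ∀ x : EuclideanSpace ℝ (Fin n), I k u x ^ (p/q)
        ≤ (mA * tJ)⁻¹ * (CA ^ (p/q) * ∫⁻ w in Qs k u x, W w ^ p ∂(muPlus (volume))) := by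
      intro x
      have hpt : ∀ w ∈ Qs k u x, I k u x ^ (p/q) ≤ CA ^ (p/q) * W w ^ p := by
        intro w hw
        calc I k u x ^ (p/q) ≤ (CA * W w ^ q) ^ (p/q) :=
              ENNReal.rpow_le_rpow (hIbound x w hw) hθ0.le
          _ = CA ^ (p/q) * (W w ^ q) ^ (p/q) := ENNReal.mul_rpow_of_nonneg _ _ hθ0.le
          _ = CA ^ (p/q) * W w ^ p := by rw [← ENNReal.rpow_mul, hqθ]
      have havg : I k u x ^ (p/q) * (mA * tJ)
          ≤ CA ^ (p/q) * ∫⁻ w in Qs k u x, W w ^ p ∂(muPlus (volume)) := by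
        calc I k u x ^ (p/q) * (mA * tJ)
            = ∫⁻ _ in Qs k u x, I k u x ^ (p/q) ∂(muPlus (volume)) := by
              rw [setLIntegral_const, hmQ x]
          _ ≤ ∫⁻ w in Qs k u x, CA ^ (p/q) * W w ^ p ∂(muPlus (volume)) :=
              setLIntegral_mono (measurable_const.mul hWpm) hpt
          _ = CA ^ (p/q) * ∫⁻ w in Qs k u x, W w ^ p ∂(muPlus (volume)) :=
              lintegral_const_mul _ hWpm
      calc I k u x ^ (p/q) = (mA * tJ)⁻¹ * (I k u x ^ (p/q) * (mA * tJ)) := by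
            rw [mul_comm ((mA * tJ)⁻¹) _, mul_assoc,
              ENNReal.mul_inv_cancel hmq0 hmqt, mul_one]
        _ ≤ _ := mul_le_mul_right havg _
    have hWbox : Measurable fun x : EuclideanSpace ℝ (Fin n) =>
        ∫⁻ w in Qs k u x, W w ^ p ∂(muPlus (volume)) := hbox _ hWpm k u
    have hswap : ∫⁻ x, ∫⁻ w in Qs k u x, W w ^ p ∂(muPlus (volume)) ∂volume
        = ∫⁻ w, (J k).indicator (fun _ => (1:ℝ≥0∞)) w.2 * W w ^ p * mA ∂(muPlus (volume)) := by
      have h1 : ∀ x : EuclideanSpace ℝ (Fin n), (∫⁻ w in Qs k u x, W w ^ p ∂(muPlus (volume)))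
          = ∫⁻ w, ({z : EuclideanSpace ℝ (Fin n) × (EuclideanSpace ℝ (Fin n) × ℝ) |
              z.2 ∈ Qs k u z.1}.indicator (fun z => W z.2 ^ p)) (x, w) ∂(muPlus (volume)) := by
        intro x
        rw [← lintegral_indicator (hQs_meas k u x)]
        congr 1
      simp_rw [h1]
      rw [lintegral_lintegral_swap]
      · refine lintegral_congr fun w => ?_
        have h2 : ∀ x : EuclideanSpace ℝ (Fin n),
            ({z : EuclideanSpace ℝ (Fin n) × (EuclideanSpace ℝ (Fin n) × ℝ) |
              z.2 ∈ Qs k u z.1}.indicator (fun z => W z.2 ^ p)) (x, w)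
            = (J k).indicator (fun _ => (1:ℝ≥0∞)) w.2 *
                ((ball (w.1 - (r ^ k) • u) ρ).indicator (fun _ => W w ^ p) x) := by
          intro x
          have hiff : w ∈ Qs k u x ↔ (w.2 ∈ J k ∧ x ∈ ball (w.1 - (r ^ k) • u) ρ) := by
            constructor
            · rintro ⟨h1', h2'⟩
              refine ⟨h2', ?_⟩
              rw [mem_ball]
              rw [← hdist k u x w.1]
              exact mem_ball.1 h1'
            · rintro ⟨h2', h1'⟩
              refine ⟨?_, h2'⟩
              rw [mem_ball, hdist k u x w.1]
              exact mem_ball.1 h1'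
          by_cases h3 : w.2 ∈ J k
          · by_cases h4 : x ∈ ball (w.1 - (r ^ k) • u) ρ
            · rw [indicator_of_mem (show (x, w) ∈ {z :
                  EuclideanSpace ℝ (Fin n) × (EuclideanSpace ℝ (Fin n) × ℝ) |
                  z.2 ∈ Qs k u z.1} from hiff.2 ⟨h3, h4⟩),
                indicator_of_mem h3, indicator_of_mem h4, one_mul]
            · have hnm : (x, w) ∉ {z : EuclideanSpace ℝ (Fin n) ×
                  (EuclideanSpace ℝ (Fin n) × ℝ) | z.2 ∈ Qs k u z.1} :=
                fun hmm => h4 (hiff.1 hmm).2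
              rw [indicator_of_notMem hnm, indicator_of_notMem h4, mul_zero]
          · have hnm : (x, w) ∉ {z : EuclideanSpace ℝ (Fin n) ×
                (EuclideanSpace ℝ (Fin n) × ℝ) | z.2 ∈ Qs k u z.1} :=
              fun hmm => h3 (hiff.1 hmm).1
            rw [indicator_of_notMem hnm, indicator_of_notMem h3, zero_mul]
        rw [lintegral_congr h2, lintegral_const_mul _
          (measurable_const.indicator measurableSet_ball)]
        rw [lintegral_indicator measurableSet_ball, setLIntegral_const, hvol _ _ hρ0.le]
        rw [hmAdef]
        ring
      · have huncur : (Function.uncurry fun (x : EuclideanSpace ℝ (Fin n))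
            (w : EuclideanSpace ℝ (Fin n) × ℝ) =>
            ({z : EuclideanSpace ℝ (Fin n) × (EuclideanSpace ℝ (Fin n) × ℝ) |
              z.2 ∈ Qs k u z.1}.indicator (fun z => W z.2 ^ p)) (x, w))
            = {z : EuclideanSpace ℝ (Fin n) × (EuclideanSpace ℝ (Fin n) × ℝ) |
              z.2 ∈ Qs k u z.1}.indicator (fun z => W z.2 ^ p) := by
          funext z
          cases z
          rfl
        rw [huncur]
        exact ((hWpm.comp measurable_snd).indicator (hQzm k u)).aemeasurable
    calc ∫⁻ x, I k u x ^ (p/q) ∂volume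
        ≤ ∫⁻ x, (mA * tJ)⁻¹ * (CA ^ (p/q) *
            ∫⁻ w in Qs k u x, W w ^ p ∂(muPlus (volume))) ∂volume := lintegral_mono hIθ
      _ = (mA * tJ)⁻¹ * CA ^ (p/q) *
            ∫⁻ x, ∫⁻ w in Qs k u x, W w ^ p ∂(muPlus (volume)) ∂volume := by
          simp_rw [← mul_assoc]
          rw [lintegral_const_mul _ hWbox]
      _ = (mA * tJ)⁻¹ * CA ^ (p/q) *
            ∫⁻ w, (J k).indicator (fun _ => (1:ℝ≥0∞)) w.2 * W w ^ p * mA ∂(muPlus (volume)) := by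
          rw [hswap]
      _ = CA ^ (p/q) * ((mA * tJ)⁻¹ * mA) *
            ∫⁻ w, (J k).indicator (fun _ => (1:ℝ≥0∞)) w.2 * W w ^ p ∂(muPlus (volume)) := by
          rw [lintegral_mul_const _ (hindm k)]
          ring
      _ ≤ CA ^ (p/q) * Ct *
            ∫⁻ w, (J k).indicator (fun _ => (1:ℝ≥0∞)) w.2 * W w ^ p ∂(muPlus (volume)) := by
          refine mul_le_mul_left (mul_le_mul_right ?_ _) _
          have hrearr : (mA * tJ)⁻¹ * mA = tJ⁻¹ := by
            rw [ENNReal.mul_inv (Or.inl hmA0) (Or.inl hmAt), mul_comm mA⁻¹ tJ⁻¹, mul_assoc,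
              ENNReal.inv_mul_cancel hmA0 hmAt, mul_one]
          rw [hrearr]
          exact ENNReal.inv_le_inv' htJl
  have hover : ∀ t : ℝ, (∑' k : ℤ, (J k).indicator (fun _ => (1:ℝ≥0∞)) t) ≤ (K : ℝ≥0∞) := by
    intro t
    by_cases ht : 0 < t
    · obtain ⟨k₀, hk₀⟩ := exists_mem_Ico_zpow ht hr1
      have hrL : σ < (r : ℝ) ^ (L : ℤ) := by rwa [zpow_natCast]
      have hsub : ∀ k : ℤ, t ∈ J k → k ∈ Finset.Icc (k₀ - L) (k₀ + L) := by
        intro k hk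
        obtain ⟨hk1, hk2⟩ := hk
        rw [Finset.mem_Icc]
        constructor
        · -- k₀ - L ≤ k : from t < r^k*σ and r^{k₀} ≤ t
          have h1 : (r:ℝ) ^ k₀ < r ^ (k + L) := by
            calc (r:ℝ) ^ k₀ ≤ t := hk₀.1
              _ < r ^ k * σ := hk2
              _ < r ^ k * r ^ (L:ℤ) := by
                  exact (mul_lt_mul_iff_right₀ (hrk0 k)).2 hrL
              _ = r ^ (k + L) := by rw [← zpow_add₀ hr0.ne']
          have := (zpow_lt_zpow_iff_right₀ hr1).1 h1
          omega
        · -- k ≤ k₀ + L : from r^k < t*σ and t < r^{k₀+1}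
          have h1 : (r:ℝ) ^ k < r ^ (k₀ + 1 + L) := by
            have h2 : (r:ℝ) ^ k < t * σ := (div_lt_iff₀ hσ0).1 hk1
            calc (r:ℝ) ^ k < t * σ := h2
              _ < r ^ (k₀ + 1) * r ^ (L:ℤ) := by
                  refine mul_lt_mul'' hk₀.2 hrL ?_ hσ0.le
                  positivity
              _ = r ^ (k₀ + 1 + L) := by rw [← zpow_add₀ hr0.ne']
          have := (zpow_lt_zpow_iff_right₀ hr1).1 h1
          omega
      calc (∑' k : ℤ, (J k).indicator (fun _ => (1:ℝ≥0∞)) t)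
          ≤ ∑' k : ℤ, (↑(Finset.Icc (k₀ - L) (k₀ + L)) : Set ℤ).indicator
              (fun _ => (1:ℝ≥0∞)) k := by
            refine ENNReal.tsum_le_tsum fun k => ?_
            by_cases hk : t ∈ J k
            · rw [indicator_of_mem hk, indicator_of_mem (by simpa using hsub k hk)]
            · rw [indicator_of_notMem hk]
              exact zero_le
        _ ≤ (K : ℝ≥0∞) := by
            rw [tsum_eq_sum (s := Finset.Icc (k₀ - L) (k₀ + L))
              (fun k hk => indicator_of_notMem (by simpa using hk) _)]
            have hone : ∀ k ∈ Finset.Icc (k₀ - L) (k₀ + L),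
                (↑(Finset.Icc (k₀ - L) (k₀ + L)) : Set ℤ).indicator (fun _ => (1:ℝ≥0∞)) k = 1 :=
              fun k hk => indicator_of_mem (by simpa using hk) _
            rw [Finset.sum_congr rfl hone, Finset.sum_const, nsmul_eq_mul, mul_one]
            have hcard : (Finset.Icc (k₀ - L) (k₀ + L)).card = K := by
              rw [Int.card_Icc, hKdef]
              omega
            rw [hcard]
    · have hz : ∀ k : ℤ, (J k).indicator (fun _ => (1:ℝ≥0∞)) t = 0 := by
        intro k
        refine indicator_of_notMem (fun hmem => ht ?_) _
        exact lt_trans (div_pos (hrk0 k) hσ0) hmem.1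
      simp [hz]
  calc ∫⁻ x, Aq (volume) q g x ^ p ∂(volume : Measure (EuclideanSpace ℝ (Fin n)))
      ≤ ∫⁻ x, ∑' k : ℤ, ∑ u ∈ S, I k u x ^ (p/q) ∂volume := lintegral_mono hAqp
    _ = ∑' k : ℤ, ∫⁻ x, ∑ u ∈ S, I k u x ^ (p/q) ∂volume :=
        lintegral_tsum (fun k => (Finset.measurable_sum S (fun u _ => hImθ k u)).aemeasurable)
    _ = ∑' k : ℤ, ∑ u ∈ S, ∫⁻ x, I k u x ^ (p/q) ∂volume := by
        congr 1
        funext k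
        exact lintegral_finset_sum S (fun u _ => hImθ k u)
    _ ≤ ∑' k : ℤ, ∑ _u ∈ S, (CA ^ (p/q) * Ct *
          ∫⁻ w, (J k).indicator (fun _ => (1:ℝ≥0∞)) w.2 * W w ^ p ∂(muPlus (volume))) :=
        ENNReal.tsum_le_tsum (fun k => Finset.sum_le_sum (fun u hu => hC k u hu))
    _ = ∑' k : ℤ, (S.card : ℝ≥0∞) * (CA ^ (p/q) * Ct *
          ∫⁻ w, (J k).indicator (fun _ => (1:ℝ≥0∞)) w.2 * W w ^ p ∂(muPlus (volume))) := by
        congr 1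
        funext k
        rw [Finset.sum_const, nsmul_eq_mul]
    _ = CA ^ (p/q) * Ct * (S.card : ℝ≥0∞) *
          ∑' k : ℤ, ∫⁻ w, (J k).indicator (fun _ => (1:ℝ≥0∞)) w.2 * W w ^ p ∂(muPlus (volume)) := by
        rw [ENNReal.tsum_mul_left, ENNReal.tsum_mul_left]
        ring
    _ = CA ^ (p/q) * Ct * (S.card : ℝ≥0∞) *
          ∫⁻ w, (∑' k : ℤ, (J k).indicator (fun _ => (1:ℝ≥0∞)) w.2) * W w ^ p ∂(muPlus (volume)) := by
        rw [← lintegral_tsum (fun k => (hindm k).aemeasurable)]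
        refine congrArg _ (lintegral_congr fun w => ?_)
        exact ENNReal.tsum_mul_right
    _ ≤ CA ^ (p/q) * Ct * (S.card : ℝ≥0∞) *
          ∫⁻ w, (K : ℝ≥0∞) * W w ^ p ∂(muPlus (volume)) :=
        mul_le_mul_right (lintegral_mono fun (w : EuclideanSpace ℝ (Fin n) × ℝ) => mul_le_mul_left (hover w.2) _) _
    _ = Cfin * ∫⁻ w, W w ^ p ∂(muPlus (volume)) := by
        rw [lintegral_const_mul _ hWpm, hCfindef]
        ring


end WTS
end
end
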